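/- arXiv:2008.02240 — 3 statements merged into one kernel-verified Lean document; each statement's English description precedes it below -/
import Mathlib

section
/- The generating function F(x) = sum over n of (number of Schröder paths of semilength n avoiding the consecutive pattern UF) x^n satisfies the algebraic equation F(x) = 1 + 2x F(x) + x (F(x) - 1 - x F(x)) F(x). -/
open PowerSeries

inductive Step : Type
  | U | D | F
  deriving DecidableEq

def Step.len : Step → ℕ
  | .U => 1 | .D => 1 | .F => 2

def Step.alt : Step → ℤ
  | .U => 1 | .D => -1 | .F => 0

/-- Total length (x-displacement) of a path. -/
def pathLen (w : List Step) : ℕ := (w.map Step.len).sum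

/-- Final altitude (y-displacement) of a path. -/
def pathAlt (w : List Step) : ℤ := (w.map Step.alt).sum

/-- A Schröder path of semilength `n`: from (0,0) to (2n,0), never below the x-axis. -/
def IsSchroeder (n : ℕ) (w : List Step) : Prop :=
  pathLen w = 2 * n ∧ pathAlt w = 0 ∧ ∀ p : List Step, p <+: w → 0 ≤ pathAlt p

/-- `w` avoids the consecutive pattern `UF`. -/
def AvoidsUF (w : List Step) : Prop := ¬ ([Step.U, Step.F] <:+: w)

/-- Number of ascents: maximal nonempty runs of consecutive up-steps,
counted via their last up-step. -/
def ascents (w : List Step) : ℕ :=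
  (List.range w.length).countP
    (fun i => decide (w[i]? = some Step.U ∧ w[i+1]? ≠ some Step.U))

noncomputable def schroederCount (n : ℕ) : ℕ :=
  Nat.card {w : List Step // IsSchroeder n w}

noncomputable def schroederUFCount (n : ℕ) : ℕ :=
  Nat.card {w : List Step // IsSchroeder n w ∧ AvoidsUF w}

noncomputable def totalAscents (n : ℕ) : ℕ :=
  ∑ᶠ w ∈ {w : List Step | IsSchroeder n w}, ascents w

noncomputable def totalAscentsSq (n : ℕ) : ℕ :=
  ∑ᶠ w ∈ {w : List Step | IsSchroeder n w}, (ascents w) ^ 2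

noncomputable def ascCount (n k : ℕ) : ℕ :=
  Nat.card {w : List Step // IsSchroeder n w ∧ ascents w = k}

noncomputable def vv : PowerSeries (Polynomial ℚ) :=
  PowerSeries.C (R := Polynomial ℚ) Polynomial.X


namespace Schro

lemma pathLen_nil : pathLen [] = 0 := rfl
lemma pathAlt_nil : pathAlt [] = 0 := rfl
lemma pathLen_cons (a : Step) (w : List Step) : pathLen (a :: w) = a.len + pathLen w := by
  simp [pathLen]
lemma pathAlt_cons (a : Step) (w : List Step) : pathAlt (a :: w) = a.alt + pathAlt w := by
  simp [pathAlt]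
lemma pathLen_append (v w : List Step) : pathLen (v ++ w) = pathLen v + pathLen w := by
  simp [pathLen]
lemma pathAlt_append (v w : List Step) : pathAlt (v ++ w) = pathAlt v + pathAlt w := by
  simp [pathAlt]

lemma length_le_pathLen (w : List Step) : w.length ≤ pathLen w := by
  induction w with
  | nil => simp [pathLen]
  | cons a l ih =>
    rw [pathLen_cons, List.length_cons]
    have : 1 ≤ a.len := by cases a <;> simp [Step.len]
    omega

lemma even_sub (w : List Step) : (2:ℤ) ∣ (pathLen w : ℤ) - pathAlt w := by
  induction w with
  | nil => simp [pathLen, pathAlt]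
  | cons a l ih =>
    rw [pathLen_cons, pathAlt_cons]
    push_cast
    have : (2:ℤ) ∣ (a.len : ℤ) - a.alt := by cases a <;> decide
    omega

lemma pathAlt_take_succ (w : List Step) (k : ℕ) (h : k < w.length) :
    pathAlt (w.take (k+1)) = pathAlt (w.take k) + (w[k]).alt := by
  rw [List.take_succ, List.getElem?_eq_getElem h, pathAlt_append]
  simp [pathAlt]

lemma prefix_iff_take (w : List Step) :
    (∀ p : List Step, p <+: w → 0 ≤ pathAlt p) ↔ ∀ k : ℕ, 0 ≤ pathAlt (w.take k) := by
  constructor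
  · intro h k; exact h _ (List.take_prefix k w)
  · intro h p hp
    rw [List.prefix_iff_eq_take.mp hp]
    exact h _

lemma avoids_iff_chain (w : List Step) :
    AvoidsUF w ↔ List.IsChain (fun a b => ¬(a = Step.U ∧ b = Step.F)) w := by
  induction w with
  | nil => simp [AvoidsUF, List.Chain']
  | cons a l ih =>
    rw [AvoidsUF, List.infix_cons_iff, not_or, ← AvoidsUF, ih, List.isChain_cons]
    constructor
    · rintro ⟨h1, h2⟩
      refine ⟨?_, h2⟩
      rintro y hy ⟨rfl, rfl⟩
      cases l with
      | nil => simp at hy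
      | cons b l' =>
        simp only [List.head?_cons, Option.mem_def, Option.some_inj] at hy
        subst hy
        exact h1 ⟨l', rfl⟩
    · rintro ⟨h1, h2⟩
      refine ⟨?_, h2⟩
      rintro ⟨t, ht⟩
      obtain ⟨rfl, rfl⟩ : a = Step.U ∧ l = Step.F :: t := by
        injection ht with h3 h4
        exact ⟨h3.symm, h4.symm⟩
      exact h1 Step.F rfl ⟨rfl, rfl⟩

end Schro
namespace Schro

def A (n : ℕ) : Set (List Step) := {w | IsSchroeder n w ∧ AvoidsUF w}
def B (n : ℕ) : Set (List Step) :=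
  {w | (IsSchroeder n w ∧ AvoidsUF w) ∧ w.head? ≠ some Step.F}

instance : Fintype Step :=
  ⟨⟨{Step.U, Step.D, Step.F}, by decide⟩, by rintro (_|_|_) <;> decide⟩

lemma finite_A (n : ℕ) : (A n).Finite := by
  apply (List.finite_length_le Step (2 * n)).subset
  rintro w ⟨⟨hlen, -, -⟩, -⟩
  simpa [← hlen] using length_le_pathLen w

lemma finite_B (n : ℕ) : (B n).Finite :=
  (finite_A n).subset fun w hw => hw.1

lemma A_zero : A 0 = {[]} := by
  ext w
  constructor
  · rintro ⟨⟨hlen, -, -⟩, -⟩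
    have := length_le_pathLen w
    rw [hlen] at this
    simp only [Set.mem_singleton_iff]
    exact List.length_eq_zero_iff.mp (by omega)
  · rintro rfl
    refine ⟨⟨rfl, rfl, ?_⟩, ?_⟩
    · intro p hp
      rw [List.prefix_nil.mp hp]; rfl
    · rintro ⟨s, t, h⟩
      simpa using congrArg List.length h

lemma B_zero : B 0 = {[]} := by
  ext w
  constructor
  · rintro ⟨hw, -⟩
    have := A_zero.le ⟨hw.1, hw.2⟩
    exact this
  · rintro rfl
    have h0 : ([] : List Step) ∈ A 0 := by rw [A_zero]; rfl
    exact ⟨h0, by simp⟩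

lemma consF_mem {n : ℕ} {w : List Step} : Step.F :: w ∈ A (n+1) ↔ w ∈ A n := by
  constructor
  · rintro ⟨⟨hlen, halt, hpre⟩, havd⟩
    refine ⟨⟨?_, ?_, ?_⟩, ?_⟩
    · rw [pathLen_cons] at hlen; simp [Step.len] at hlen; omega
    · rw [pathAlt_cons] at halt; simpa [Step.alt] using halt
    · intro p hp
      have := hpre (Step.F :: p) (List.cons_prefix_cons.mpr ⟨rfl, hp⟩)
      rwa [pathAlt_cons, Step.alt, zero_add] at this
    · intro h
      exact havd (h.trans (List.suffix_cons Step.F w).isInfix)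
  · rintro ⟨⟨hlen, halt, hpre⟩, havd⟩
    refine ⟨⟨?_, ?_, ?_⟩, ?_⟩
    · rw [pathLen_cons, hlen]; simp [Step.len]; ring
    · rw [pathAlt_cons, halt]; rfl
    · rw [prefix_iff_take] at hpre ⊢
      intro k
      cases k with
      | zero => simp [pathAlt_nil]
      | succ k =>
        rw [List.take_succ_cons, pathAlt_cons, Step.alt, zero_add]
        exact hpre k
    · rw [avoids_iff_chain] at havd ⊢
      rw [List.isChain_cons]
      exact ⟨by rintro y - ⟨h, -⟩; exact Step.noConfusion h, havd⟩

lemma glue_mem {i j : ℕ} {q r : List Step} (hq : q ∈ B i) (hr : r ∈ A j) :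
    Step.U :: q ++ Step.D :: r ∈ A (i + j + 1) := by
  obtain ⟨⟨⟨hqlen, hqalt, hqpre⟩, hqavd⟩, hqhd⟩ := hq
  obtain ⟨⟨hrlen, hralt, hrpre⟩, hravd⟩ := hr
  rw [prefix_iff_take] at hqpre hrpre
  rw [List.cons_append]
  refine ⟨⟨?_, ?_, ?_⟩, ?_⟩
  · rw [pathLen_cons, pathLen_append, pathLen_cons, hqlen, hrlen]
    simp [Step.len]; ring
  · rw [pathAlt_cons, pathAlt_append, pathAlt_cons, hqalt, hralt]
    simp [Step.alt]
  · rw [prefix_iff_take]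
    intro k
    cases k with
    | zero => simp [pathAlt_nil]
    | succ k =>
      rw [List.take_succ_cons, pathAlt_cons, Step.alt]
      rcases le_or_gt k q.length with hk | hk
      · rw [List.take_append_of_le_length hk]
        have := hqpre k
        omega
      · rw [List.take_append, List.take_of_length_le hk.le,
          pathAlt_append, hqalt]
        have h2 : 0 ≤ pathAlt (List.take (k - q.length) (Step.D :: r)) + 1 := by
          cases hkq : k - q.length with
          | zero => simp [pathAlt_nil]
          | succ m =>
            rw [List.take_succ_cons, pathAlt_cons, Step.alt]
            have := hrpre m
            omega
        omega
  · rw [avoids_iff_chain] at hqavd hravd ⊢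
    rw [← List.cons_append, List.isChain_append, List.isChain_cons, List.isChain_cons]
    refine ⟨⟨?_, hqavd⟩, ⟨?_, hravd⟩, ?_⟩
    · intro y hy
      rintro ⟨-, rfl⟩
      cases q with
      | nil => simp at hy
      | cons b l =>
        simp only [List.head?_cons, Option.mem_def, Option.some_inj] at hy
        exact hqhd (by simp [hy])
    · rintro y - ⟨h, -⟩; exact Step.noConfusion h
    · rintro x - y hy ⟨-, rfl⟩; simp at hy

end Schro
namespace Schro

lemma not_lt_decomp {q1 r1 q2 r2 : List Step}
    (h2alt : pathAlt q2 = 0) (h2pre : ∀ k, 0 ≤ pathAlt (q2.take k))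
    (h1alt : pathAlt q1 = 0)
    (heq : q1 ++ Step.D :: r1 = q2 ++ Step.D :: r2)
    (hlt : q1.length < q2.length) : False := by
  have htake : q2.take q1.length = q1 := by
    rw [← List.take_append_of_le_length hlt.le (l₂ := Step.D :: r2), ← heq,
      List.take_left]
  have hidx : q2[q1.length]'hlt = Step.D := by
    have h1 : (q1 ++ Step.D :: r1)[q1.length]? = some Step.D := by
      rw [List.getElem?_append_right le_rfl]
      simp
    have h2 : (q2 ++ Step.D :: r2)[q1.length]? = some (q2[q1.length]'hlt) := by
      rw [List.getElem?_append_left hlt, List.getElem?_eq_getElem hlt]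
    rw [heq] at h1
    rw [h1] at h2
    exact (Option.some_inj.mp h2).symm
  have := h2pre (q1.length + 1)
  rw [pathAlt_take_succ q2 q1.length hlt, htake, h1alt, hidx] at this
  simp [Step.alt] at this

lemma unique_decomp {q1 r1 q2 r2 : List Step}
    (h1alt : pathAlt q1 = 0) (h1pre : ∀ k, 0 ≤ pathAlt (q1.take k))
    (h2alt : pathAlt q2 = 0) (h2pre : ∀ k, 0 ≤ pathAlt (q2.take k))
    (heq : q1 ++ Step.D :: r1 = q2 ++ Step.D :: r2) : q1 = q2 ∧ r1 = r2 := by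
  have hlen : q1.length = q2.length := by
    rcases lt_trichotomy q1.length q2.length with h | h | h
    · exact absurd (not_lt_decomp h2alt h2pre h1alt heq h) (by simp)
    · exact h
    · exact absurd (not_lt_decomp h1alt h1pre h2alt heq.symm h) (by simp)
  obtain ⟨hq, hr⟩ := List.append_inj heq hlen
  exact ⟨hq, by injection hr⟩

lemma decomp {n : ℕ} {w : List Step} (hw : w ∈ A (n+1)) :
    (∃ w', w = Step.F :: w' ∧ w' ∈ A n) ∨
    (∃ i j, i + j = n ∧ ∃ q ∈ B i, ∃ r ∈ A j, w = Step.U :: q ++ Step.D :: r) := by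
  obtain ⟨⟨hlen, halt, hpre⟩, havd⟩ := hw
  rw [prefix_iff_take] at hpre
  -- w is nonempty
  obtain ⟨a, t, rfl⟩ : ∃ a t, w = a :: t := by
    cases w with
    | nil => simp [pathLen_nil] at hlen
    | cons a t => exact ⟨a, t, rfl⟩
  -- first step cannot be D
  have ha1 := hpre 1
  rw [List.take_succ_cons, List.take_zero, pathAlt_cons, pathAlt_nil, add_zero] at ha1
  cases a with
  | D => simp [Step.alt] at ha1
  | F =>
    left
    exact ⟨t, rfl, consF_mem.mp ⟨⟨hlen, halt, (prefix_iff_take _).mpr hpre⟩, havd⟩⟩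
  | U =>
    right
    -- altitude of t starts needing to return to -1
    have htalt : pathAlt t = -1 := by
      rw [pathAlt_cons] at halt; simp [Step.alt] at halt; omega
    have htne : t ≠ [] := by rintro rfl; simp [pathAlt_nil] at htalt
    have hex : ∃ k, pathAlt (t.take (k+1)) < 0 := by
      refine ⟨t.length - 1, ?_⟩
      rw [Nat.sub_add_cancel (List.length_pos_iff.mpr htne), List.take_length, htalt]
      norm_num
    classical
    obtain ⟨k, hkspec, hkmin⟩ :
        ∃ k, pathAlt (t.take (k+1)) < 0 ∧ ∀ m < k, 0 ≤ pathAlt (t.take (m+1)) :=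
      ⟨Nat.find hex, Nat.find_spec hex, fun m hm => not_lt.mp (Nat.find_min hex hm)⟩
    have hpre_t : ∀ m, (-1 : ℤ) ≤ pathAlt (t.take m) := by
      intro m
      have := hpre (m+1)
      rw [List.take_succ_cons, pathAlt_cons, Step.alt] at this
      omega
    have hk0 : 0 ≤ pathAlt (t.take k) := by
      cases k with
      | zero => simp [pathAlt_nil]
      | succ m => exact hkmin m (by omega)
    have hklt : k < t.length := by
      by_contra hcon
      push_neg at hcon
      rw [List.take_of_length_le (by omega), htalt] at hk0
      omega
    have hstep := pathAlt_take_succ t k hklt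
    have htk : t[k].alt = -1 ∧ pathAlt (t.take k) = 0 := by
      have hb : (-1 : ℤ) ≤ t[k].alt := by cases t[k] <;> simp [Step.alt]
      constructor <;> omega
    have htkD : t[k] = Step.D := by
      have := htk.1
      cases h : t[k] <;> rw [h] at this <;> simp [Step.alt] at this ⊢
    -- basic facts about q := t.take k and r := t.drop (k+1)
    have hqalt : pathAlt (t.take k) = 0 := htk.2
    have hk1alt : pathAlt (t.take (k+1)) = -1 := by
      rw [hstep, hqalt, htk.1]; ring
    have teq : t = t.take k ++ Step.D :: t.drop (k+1) := by
      conv_lhs => rw [← List.take_append_drop k t]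
      rw [List.drop_eq_getElem_cons hklt, htkD]
    have hralt : pathAlt (t.drop (k+1)) = 0 := by
      have : pathAlt t = pathAlt (t.take (k+1)) + pathAlt (t.drop (k+1)) := by
        rw [← pathAlt_append, List.take_append_drop]
      rw [htalt, hk1alt] at this
      omega
    have hqpre : ∀ m, 0 ≤ pathAlt ((t.take k).take m) := by
      intro m
      rw [List.take_take]
      rcases Nat.lt_or_ge m k with h | h
      · rw [min_eq_left h.le]
        cases m with
        | zero => simp [pathAlt_nil]
        | succ m' => exact hkmin m' (by omega)
      · rw [min_eq_right h]
        rw [hqalt]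
    have hrpre : ∀ m, 0 ≤ pathAlt ((t.drop (k+1)).take m) := by
      intro m
      have h1 := hpre_t (k+1+m)
      rw [List.take_add, pathAlt_append, hk1alt] at h1
      omega
    have hqdvd : 2 ∣ pathLen (t.take k) := by
      have h := even_sub (t.take k)
      rw [hqalt, sub_zero] at h
      exact_mod_cast h
    have hrdvd : 2 ∣ pathLen (t.drop (k+1)) := by
      have h := even_sub (t.drop (k+1))
      rw [hralt, sub_zero] at h
      exact_mod_cast h
    have hsum : pathLen (t.take k) + pathLen (t.drop (k+1)) = 2 * n := by
      have h1 : pathLen t = pathLen (t.take k) + (1 + pathLen (t.drop (k+1))) := by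
        conv_lhs => rw [teq]
        rw [pathLen_append, pathLen_cons]
        simp [Step.len]
      rw [pathLen_cons] at hlen
      simp [Step.len] at hlen
      omega
    have havdq : AvoidsUF (t.take k) := fun h =>
      havd (h.trans ((List.take_prefix k t).isInfix.trans (t.suffix_cons Step.U).isInfix))
    have havdr : AvoidsUF (t.drop (k+1)) := fun h =>
      havd (h.trans ((List.drop_suffix (k+1) t).isInfix.trans (t.suffix_cons Step.U).isInfix))
    have hqhd : (t.take k).head? ≠ some Step.F := by
      intro hhd
      obtain ⟨q', hq'⟩ : ∃ q', t.take k = Step.F :: q' := by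
        cases h : t.take k with
        | nil => rw [h] at hhd; simp at hhd
        | cons b l =>
          rw [h] at hhd
          simp only [List.head?_cons, Option.some_inj] at hhd
          exact ⟨l, by rw [hhd]⟩
      apply havd
      refine ⟨[], q' ++ Step.D :: t.drop (k+1), ?_⟩
      rw [List.nil_append]
      show Step.U :: Step.F :: (q' ++ Step.D :: t.drop (k+1)) = Step.U :: t
      conv_rhs => rw [teq, hq']
      rw [List.cons_append]
    refine ⟨pathLen (t.take k) / 2, pathLen (t.drop (k+1)) / 2, by omega,
      t.take k, ⟨⟨⟨by omega, hqalt, (prefix_iff_take _).mpr hqpre⟩, havdq⟩, hqhd⟩,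
      t.drop (k+1), ⟨⟨by omega, hralt, (prefix_iff_take _).mpr hrpre⟩, havdr⟩, ?_⟩
    rw [List.cons_append, ← teq]

end Schro
namespace Schro

noncomputable def AF (n : ℕ) : Finset (List Step) := (finite_A n).toFinset
noncomputable def BF (n : ℕ) : Finset (List Step) := (finite_B n).toFinset

lemma mem_AF {n : ℕ} {w : List Step} : w ∈ AF n ↔ w ∈ A n := Set.Finite.mem_toFinset _
lemma mem_BF {n : ℕ} {w : List Step} : w ∈ BF n ↔ w ∈ B n := Set.Finite.mem_toFinset _

lemma card_AF (n : ℕ) : schroederUFCount n = (AF n).card := by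
  have h : Nat.card {w : List Step // IsSchroeder n w ∧ AvoidsUF w} = Nat.card (A n) :=
    Nat.card_congr (Equiv.subtypeEquivRight fun w => Iff.rfl)
  rw [schroederUFCount, h, Nat.card_coe_set_eq,
    Set.ncard_eq_toFinset_card _ (finite_A n)]
  rfl

lemma AF_zero : (AF 0).card = 1 := by
  have : AF 0 = {[]} := by
    ext w; rw [mem_AF, A_zero]; simp
  rw [this]
  rfl

lemma BF_zero : (BF 0).card = 1 := by
  have : BF 0 = {[]} := by
    ext w; rw [mem_BF, B_zero]; simp
  rw [this]
  rfl

lemma glue_inj {i i' : ℕ} {q r q' r' : List Step} (hq : q ∈ B i) (hq' : q' ∈ B i')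
    (h : Step.U :: q ++ Step.D :: r = Step.U :: q' ++ Step.D :: r') : q = q' ∧ r = r' := by
  have h2 : q ++ Step.D :: r = q' ++ Step.D :: r' := by
    rw [List.cons_append, List.cons_append] at h
    injection h
  exact unique_decomp hq.1.1.2.1 ((prefix_iff_take _).mp hq.1.1.2.2)
    hq'.1.1.2.1 ((prefix_iff_take _).mp hq'.1.1.2.2) h2

lemma card_split (i : ℕ) : (AF (i+1)).card = (BF (i+1)).card + (AF i).card := by
  have hset : AF (i+1) = BF (i+1) ∪ (AF i).image (Step.F :: ·) := by
    ext w
    simp only [mem_AF, Finset.mem_union, mem_BF, Finset.mem_image]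
    constructor
    · intro hw
      by_cases h : w.head? = some Step.F
      · right
        obtain ⟨w', rfl⟩ : ∃ w', w = Step.F :: w' := by
          cases w with
          | nil => simp at h
          | cons a l =>
            simp only [List.head?_cons, Option.some_inj] at h
            exact ⟨l, by rw [h]⟩
        exact ⟨w', consF_mem.mp hw, rfl⟩
      · left; exact ⟨hw, h⟩
    · rintro (hw | ⟨w', hw', rfl⟩)
      · exact hw.1
      · exact consF_mem.mpr hw'
  rw [hset, Finset.card_union_of_disjoint, Finset.card_image_of_injective _
    (fun a b h => by injection h)]
  rw [Finset.disjoint_right]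
  rintro w hw hw'
  rw [Finset.mem_image] at hw
  obtain ⟨w', -, rfl⟩ := hw
  exact (mem_BF.mp hw').2 rfl

lemma card_main (n : ℕ) : (AF (n+1)).card =
    (AF n).card + ∑ p ∈ Finset.HasAntidiagonal.antidiagonal n, (BF p.1).card * (AF p.2).card := by
  classical
  set g : ℕ × ℕ → Finset (List Step) :=
    fun p => ((BF p.1) ×ˢ (AF p.2)).image (fun qr => Step.U :: qr.1 ++ Step.D :: qr.2) with hg
  have hset : AF (n+1) = (AF n).image (Step.F :: ·) ∪ (Finset.HasAntidiagonal.antidiagonal n).biUnion g := by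
    ext w
    simp only [mem_AF, Finset.mem_union, Finset.mem_image, Finset.mem_biUnion, hg,
      Finset.HasAntidiagonal.mem_antidiagonal, Finset.mem_product, mem_BF, Prod.exists]
    constructor
    · intro hw
      rcases decomp hw with ⟨w', rfl, hw'⟩ | ⟨i, j, hij, q, hq, r, hr, rfl⟩
      · exact Or.inl ⟨w', hw', rfl⟩
      · exact Or.inr ⟨i, j, hij, q, r, ⟨hq, hr⟩, rfl⟩
    · rintro (⟨w', hw', rfl⟩ | ⟨i, j, hij, q, r, ⟨hq, hr⟩, rfl⟩)
      · exact consF_mem.mpr hw'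
      · have := glue_mem hq hr
        rwa [hij] at this
  rw [hset, Finset.card_union_of_disjoint, Finset.card_image_of_injective _
    (fun a b h => by injection h), Finset.card_biUnion]
  · congr 1
    refine Finset.sum_congr rfl fun p hp => ?_
    rw [hg]
    rw [Finset.card_image_of_injOn, Finset.card_product]
    rintro ⟨q, r⟩ hqr ⟨q', r'⟩ hqr' h
    rw [Finset.mem_coe, Finset.mem_product] at hqr hqr'
    obtain ⟨h1, h2⟩ := glue_inj (mem_BF.mp hqr.1) (mem_BF.mp hqr'.1) h
    exact Prod.ext h1 h2
  · -- pairwise disjoint cells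
    rintro ⟨i, j⟩ hij ⟨i', j'⟩ hij' hne
    rw [Function.onFun, Finset.disjoint_left]
    rintro w hw hw'
    rw [hg, Finset.mem_image] at hw hw'
    obtain ⟨⟨q, r⟩, hqr, rfl⟩ := hw
    obtain ⟨⟨q', r'⟩, hqr', heq⟩ := hw'
    rw [Finset.mem_product] at hqr hqr'
    have hq := mem_BF.mp hqr.1
    have hq' := mem_BF.mp hqr'.1
    obtain ⟨rfl, rfl⟩ := glue_inj hq' hq heq
    apply hne
    have e1 : 2 * i' = 2 * i := by rw [← hq'.1.1.1, ← hq.1.1.1]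
    have e2 : 2 * j' = 2 * j := by
      rw [← (mem_AF.mp hqr'.2).1.1, ← (mem_AF.mp hqr.2).1.1]
    simp only [Prod.mk.injEq]
    omega
  · -- disjoint F-image and biUnion
    rw [Finset.disjoint_right]
    rintro w hw hw'
    rw [Finset.mem_biUnion] at hw
    obtain ⟨p, -, hp⟩ := hw
    rw [hg, Finset.mem_image] at hp
    obtain ⟨⟨q, r⟩, -, rfl⟩ := hp
    rw [Finset.mem_image] at hw'
    obtain ⟨w', -, hw'⟩ := hw'
    simp at hw'

end Schro
theorem stmt0 (F : PowerSeries ℚ)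
    (hF : F = PowerSeries.mk fun n => (schroederUFCount n : ℚ)) :
    F = 1 + 2 * X * F + X * (F - 1 - X * F) * F := by
  have hFa : F = PowerSeries.mk fun n => ((Schro.AF n).card : ℚ) := by
    rw [hF]
    ext n
    rw [PowerSeries.coeff_mk, PowerSeries.coeff_mk, Schro.card_AF]
  set G : PowerSeries ℚ := PowerSeries.mk fun n => ((Schro.BF n).card : ℚ) with hGdef
  have hG : G = F - X * F := by
    ext n
    rw [map_sub]
    cases n with
    | zero =>
      rw [hGdef, hFa]
      simp [PowerSeries.coeff_mk, PowerSeries.coeff_mul, Schro.BF_zero, Schro.AF_zero]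
    | succ n =>
      rw [hGdef, hFa, PowerSeries.coeff_succ_X_mul]
      simp only [PowerSeries.coeff_mk]
      have h := Schro.card_split n
      rw [h]
      push_cast
      ring
  have hE : F = 1 + X * F + X * (G * F) := by
    ext n
    rw [map_add, map_add]
    cases n with
    | zero =>
      rw [hFa]
      simp [PowerSeries.coeff_mk, PowerSeries.coeff_mul, Schro.AF_zero]
    | succ n =>
      rw [hFa, PowerSeries.coeff_succ_X_mul, PowerSeries.coeff_succ_X_mul,
        PowerSeries.coeff_mul]
      simp only [PowerSeries.coeff_mk, hGdef, PowerSeries.coeff_one, Nat.succ_ne_zero,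
        if_false, zero_add]
      have h := Schro.card_main n
      rw [h]
      push_cast
      ring
  linear_combination hE + X * F * hG
end

section
/- Let r_n = [x^n] (1 - x - sqrt(1-6x+x^2))/(2x) be the large Schröder numbers. Then r_n ~ (1/2) * (2*sqrt(8))^{1/2} / (2*sqrt(pi)) * (3 - sqrt(8))^{-n - 1/2} * n^{-3/2} as n → ∞, i.e., the ratio of the two sides tends to 1. -/
open PowerSeries

open Filter Finset Real

/-- coefficients of sqrt(1 - 4c x) -/
noncomputable def myCat (c : ℝ) : ℕ → ℝ
  | 0 => 1
  | (k+1) => -2 * catalan k * c ^ (k+1)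

@[simp] lemma myCat_zero (c : ℝ) : myCat c 0 = 1 := rfl
lemma myCat_succ (c : ℝ) (k : ℕ) : myCat c (k+1) = -2 * catalan k * c ^ (k+1) := rfl

lemma catalan_range_sum (m : ℕ) :
    (catalan (m+1) : ℝ) = ∑ k ∈ Finset.range (m+1), (catalan k : ℝ) * catalan (m - k) := by
  rw [catalan_succ' m, Finset.Nat.sum_antidiagonal_eq_sum_range_succ_mk]
  push_cast
  rfl

lemma myCat_sq (c : ℝ) :
    (PowerSeries.mk (myCat c)) ^ 2 = 1 - PowerSeries.C (4 * c) * X := by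
  ext n
  rw [sq, PowerSeries.coeff_mul, Finset.Nat.sum_antidiagonal_eq_sum_range_succ_mk]
  simp only [coeff_mk]
  match n with
  | 0 => simp
  | 1 =>
      rw [Finset.sum_range_succ, Finset.sum_range_succ]
      simp [myCat_succ, PowerSeries.coeff_one, PowerSeries.coeff_C_mul, PowerSeries.coeff_X]
      ring
  | (m+2) =>
      have h1 : ((m:ℕ)+2) ≠ 1 := by omega
      rw [Finset.sum_range_succ, Finset.sum_range_succ']
      have hmid : ∀ k ∈ Finset.range (m+1),
          myCat c (k+1) * myCat c (m + 2 - (k+1)) = 4 * ((catalan k : ℝ) * catalan (m - k)) * c ^ (m+2) := by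
        intro k hk
        rw [Finset.mem_range] at hk
        have : m + 2 - (k+1) = (m - k) + 1 := by omega
        rw [this, myCat_succ, myCat_succ]
        have hpow : c ^ (k+1) * c ^ (m - k + 1) = c ^ (m+2) := by
          rw [← pow_add]; congr 1; omega
        calc -2 * (catalan k:ℝ) * c ^ (k+1) * (-2 * (catalan (m-k):ℝ) * c ^ (m-k+1))
            = 4 * ((catalan k : ℝ) * catalan (m - k)) * (c ^ (k+1) * c ^ (m-k+1)) := by ring
          _ = _ := by rw [hpow]
      rw [Finset.sum_congr rfl hmid, ← Finset.sum_mul, ← Finset.mul_sum, ← catalan_range_sum]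
      simp only [myCat_zero, Nat.sub_zero, Nat.sub_self]
      rw [myCat_succ]
      simp [PowerSeries.coeff_one, PowerSeries.coeff_C_mul, PowerSeries.coeff_X, h1]
      ring

noncomputable def alC : ℝ := 3 + Real.sqrt 8
noncomputable def beC : ℝ := 3 - Real.sqrt 8

lemma sqrt8_sq : Real.sqrt 8 * Real.sqrt 8 = 8 := Real.mul_self_sqrt (by norm_num)

lemma sqrt8_lt : Real.sqrt 8 < 3 := by
  rw [show (3:ℝ) = Real.sqrt 9 by rw [show (9:ℝ) = 3^2 by norm_num, Real.sqrt_sq]; norm_num]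
  exact Real.sqrt_lt_sqrt (by norm_num) (by norm_num)

lemma sqrt8_gt : (5/2 : ℝ) < Real.sqrt 8 := by
  have : ((5/2:ℝ))^2 < 8 := by norm_num
  nlinarith [Real.sq_sqrt (show (0:ℝ) ≤ 8 by norm_num), Real.sqrt_nonneg 8]

lemma beC_pos : 0 < beC := by unfold beC; linarith [sqrt8_lt]
lemma beC_lt_half : beC < 1/2 := by unfold beC; linarith [sqrt8_gt]
lemma alC_pos : 0 < alC := by unfold alC; linarith [Real.sqrt_nonneg 8]
lemma alC_mul_beC : alC * beC = 1 := by unfold alC beC; nlinarith [sqrt8_sq]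
lemma alC_add_beC : alC + beC = 6 := by unfold alC beC; ring
lemma alC_sub_beC : alC - beC = 2 * Real.sqrt 8 := by unfold alC beC; ring
lemma alC_eq_inv : alC = beC⁻¹ := by
  field_simp [beC_pos.ne']
  linarith [alC_mul_beC]

lemma prodC_eq : (1 - PowerSeries.C alC * X) * (1 - PowerSeries.C beC * X)
    = (1 : PowerSeries ℝ) - 6 * X + X ^ 2 := by
  have h1 : (PowerSeries.C alC) * (PowerSeries.C beC) = 1 := by
    rw [← map_mul, alC_mul_beC, map_one]
  have h2 : (PowerSeries.C alC) + (PowerSeries.C beC) = 6 := by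
    rw [← map_add, alC_add_beC]
    simp [map_ofNat]
  calc (1 - PowerSeries.C alC * X) * (1 - PowerSeries.C beC * X)
      = 1 - ((PowerSeries.C alC) + (PowerSeries.C beC)) * X
        + ((PowerSeries.C alC) * (PowerSeries.C beC)) * X^2 := by ring
    _ = _ := by rw [h1, h2, one_mul]

noncomputable def AserX : PowerSeries ℝ := PowerSeries.mk (myCat (alC/4))
noncomputable def BserX : PowerSeries ℝ := PowerSeries.mk (myCat (beC/4))

lemma ABsq : (BserX * AserX) ^ 2 = (1 : PowerSeries ℝ) - 6 * X + X ^ 2 := by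
  rw [mul_pow]
  unfold AserX BserX
  rw [myCat_sq, myCat_sq]
  rw [show 4 * (alC/4) = alC by ring, show 4 * (beC/4) = beC by ring, mul_comm, prodC_eq]

lemma s_eq (s : PowerSeries ℝ) (hs : s ^ 2 = 1 - 6 * X + X ^ 2)
    (hs0 : constantCoeff s = 1) : s = BserX * AserX := by
  have h0 : (s - BserX * AserX) * (s + BserX * AserX) = 0 := by
    have := ABsq
    ring_nf
    rw [sq] at hs this ⊢
    linear_combination hs - this
  rcases mul_eq_zero.mp h0 with h | h
  · exact sub_eq_zero.mp h
  · exfalso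
    have := congrArg (constantCoeff) h
    simp only [map_add, map_mul, hs0, map_zero] at this
    unfold AserX BserX at this
    rw [constantCoeff_mk, constantCoeff_mk] at this
    simp [myCat_zero] at this

noncomputable def SSum (n : ℕ) : ℝ :=
  ∑ k ∈ Finset.range (n+2), myCat (beC/4) k * myCat (alC/4) (n+1-k)

lemma coeff_BA (m : ℕ) : (PowerSeries.coeff m) (BserX * AserX)
    = ∑ k ∈ Finset.range (m+1), myCat (beC/4) k * myCat (alC/4) (m-k) := by
  rw [PowerSeries.coeff_mul, Finset.Nat.sum_antidiagonal_eq_sum_range_succ_mk]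
  unfold AserX BserX
  simp [coeff_mk]

lemma coeff_E_eq (E : PowerSeries ℝ) (hE : 2 * X * E = 1 - X - (BserX * AserX))
    (n : ℕ) (hn : 1 ≤ n) :
    PowerSeries.coeff n E = -(1/2) * SSum n := by
  have h := congrArg (PowerSeries.coeff (n+1)) hE
  have h2 : (2 : PowerSeries ℝ) = PowerSeries.C 2 := by
    simp [map_ofNat]
  rw [mul_assoc, h2, PowerSeries.coeff_C_mul, PowerSeries.coeff_succ_X_mul] at h
  rw [map_sub, map_sub] at h
  rw [PowerSeries.coeff_one, PowerSeries.coeff_X, coeff_BA] at h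
  have hn1 : (n+1) ≠ 0 := by omega
  have hn2 : (n+1) ≠ 1 := by omega
  rw [if_neg hn1, if_neg hn2] at h
  have : (SSum n) = ∑ k ∈ Finset.range (n+1+1), myCat (beC/4) k * myCat (alC/4) (n+1-k) := rfl
  rw [← this] at h
  linarith

lemma catalan_pos' (n : ℕ) : 0 < catalan n := by
  have h := succ_mul_catalan_eq_centralBinom n
  have h2 := Nat.centralBinom_pos n
  by_contra hc
  push_neg at hc
  interval_cases hcat : catalan n
  omega

lemma catalan_le_four_pow (n : ℕ) : catalan n ≤ 4 ^ n := by
  have h1 : catalan n ≤ n.centralBinom := by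
    have h := succ_mul_catalan_eq_centralBinom n
    nlinarith [catalan_pos' n]
  refine h1.trans ?_
  have h2 : (2*n).choose n ≤ ∑ m ∈ Finset.range (2*n+1), (2*n).choose m :=
    Finset.single_le_sum (f := fun m => (2*n).choose m) (fun i _ => Nat.zero_le _)
      (Finset.mem_range.mpr (by omega))
  rw [show n.centralBinom = (2*n).choose n from rfl]
  rw [Nat.sum_range_choose] at h2
  calc n.centralBinom ≤ 2 ^ (2*n) := h2
    _ = 4 ^ n := by rw [pow_mul]; norm_num

lemma catalan_rec (n : ℕ) : (n + 2) * catalan (n+1) = 2 * (2*n+1) * catalan n := by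
  have h1 := succ_mul_catalan_eq_centralBinom (n+1)
  have h2 := Nat.succ_mul_centralBinom_succ n
  have h3 := succ_mul_catalan_eq_centralBinom n
  have key : (n+1) * ((n + 2) * catalan (n+1)) = (n+1) * (2 * (2*n+1) * catalan n) := by
    calc (n+1) * ((n + 2) * catalan (n+1))
        = (n+1) * ((n+1+1) * catalan (n+1)) := by ring_nf
      _ = (n+1) * (n+1).centralBinom := by rw [h1]
      _ = 2 * (2*n+1) * n.centralBinom := h2
      _ = 2 * (2*n+1) * ((n+1) * catalan n) := by rw [h3]
      _ = (n+1) * (2 * (2*n+1) * catalan n) := by ring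
  exact Nat.eq_of_mul_eq_mul_left (by omega) key

lemma catalan_monotone' : Monotone catalan := by
  apply monotone_nat_of_le_succ
  intro n
  have h := catalan_rec n
  nlinarith [catalan_pos' n, catalan_pos' (n+1)]


lemma stirlingSeq_pos' (n : ℕ) (hn : 1 ≤ n) : 0 < Stirling.stirlingSeq n := by
  rw [Stirling.stirlingSeq]
  have h1 : (0:ℝ) < n.factorial := by positivity
  have h2 : (0:ℝ) < Real.sqrt (2*n) := Real.sqrt_pos.mpr (by positivity)
  have h3 : (0:ℝ) < ((n:ℝ)/Real.exp 1)^n := by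
    apply pow_pos
    have : (0:ℝ) < (n:ℝ) := by exact_mod_cast hn
    positivity
  positivity

lemma fact_eq_stirling (n : ℕ) (hn : 1 ≤ n) :
    (n.factorial : ℝ) = Stirling.stirlingSeq n * (Real.sqrt (2*n) * ((n:ℝ)/Real.exp 1)^n) := by
  rw [Stirling.stirlingSeq]
  have h2 : (0:ℝ) < Real.sqrt (2*n) := Real.sqrt_pos.mpr (by positivity)
  have h3 : (0:ℝ) < ((n:ℝ)/Real.exp 1)^n := by
    apply pow_pos
    have : (0:ℝ) < (n:ℝ) := by exact_mod_cast hn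
    positivity
  field_simp

lemma cb_fact (n : ℕ) : (n.centralBinom : ℝ) * (n.factorial : ℝ) * (n.factorial : ℝ) = ((2*n).factorial : ℝ) := by
  have h := Nat.choose_mul_factorial_mul_factorial (show n ≤ 2*n by omega)
  have h2 : 2*n - n = n := by omega
  rw [h2] at h
  exact_mod_cast congrArg (fun x : ℕ => (x : ℝ)) h

lemma cb_stirling (n : ℕ) (hn : 1 ≤ n) :
    (n.centralBinom : ℝ) * Real.sqrt n / 4 ^ n
      = Stirling.stirlingSeq (2*n) / (Stirling.stirlingSeq n)^2 := by
  have hf := cb_fact n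
  have h1 := fact_eq_stirling n hn
  have h2 := fact_eq_stirling (2*n) (by omega)
  have hnp : (0:ℝ) < (n:ℝ) := by exact_mod_cast hn
  have hsn : (0:ℝ) < Real.sqrt n := Real.sqrt_pos.mpr hnp
  have hst : 0 < Stirling.stirlingSeq n := stirlingSeq_pos' n hn
  have hst2 : 0 < Stirling.stirlingSeq (2*n) := stirlingSeq_pos' (2*n) (by omega)
  have hep : (0:ℝ) < Real.exp 1 := Real.exp_pos 1
  set q := Real.sqrt (2*(n:ℝ)) with hqdef
  set p := ((n:ℝ)/Real.exp 1)^n with hpdef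
  have hppos : 0 < p := by rw [hpdef]; positivity
  have hq2 : q * q = 2 * (n:ℝ) := Real.mul_self_sqrt (by positivity)
  have hx : Real.sqrt n * Real.sqrt n = (n:ℝ) := Real.mul_self_sqrt hnp.le
  have hsqrt : Real.sqrt (2*((2*n:ℕ):ℝ)) = 2 * Real.sqrt n := by
    push_cast
    rw [show (2:ℝ) * (2*n) = (2:ℝ)^2 * n by ring,
      Real.sqrt_mul (by positivity), Real.sqrt_sq (by norm_num)]
  have hpow : (((2*n:ℕ):ℝ)/Real.exp 1)^(2*n) = 4^n * p^2 := by
    rw [hpdef]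
    push_cast
    rw [show (2*(n:ℝ))/Real.exp 1 = 2 * ((n:ℝ)/Real.exp 1) by ring, mul_pow,
      pow_mul (2:ℝ), mul_comm 2 n, pow_mul ((n:ℝ)/Real.exp 1)]
    norm_num
  rw [h1, h2, hsqrt, hpow] at hf
  -- hf : cb * (st_n*(q*p)) * (st_n*(q*p)) = st2 * (2√n * (4^n * p^2))
  rw [div_eq_div_iff (by positivity) (by positivity)]
  have hc : (2 * p^2 * Real.sqrt n) ≠ 0 := by positivity
  apply mul_right_cancel₀ hc
  linear_combination hf
    + 2*(n.centralBinom : ℝ)*(Stirling.stirlingSeq n)^2*p^2*hx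
    - (n.centralBinom : ℝ)*(Stirling.stirlingSeq n)^2*p^2*hq2

noncomputable def Kseq (n : ℕ) : ℝ :=
  (catalan n : ℝ) * Real.sqrt π * (n:ℝ)^((3:ℝ)/2) / 4^n

lemma sqrtPi_pos : 0 < Real.sqrt π := Real.sqrt_pos.mpr Real.pi_pos

lemma tendsto_cbseq :
    Filter.Tendsto (fun n : ℕ => (n.centralBinom : ℝ) * Real.sqrt n / 4^n)
      Filter.atTop (nhds ((Real.sqrt π)⁻¹)) := by
  have h2n : Filter.Tendsto (fun n : ℕ => 2*n) Filter.atTop Filter.atTop := by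
    apply Filter.tendsto_atTop_mono (fun n => by omega : ∀ n : ℕ, n ≤ 2*n) Filter.tendsto_id
  have hst2 : Filter.Tendsto (fun n : ℕ => Stirling.stirlingSeq (2*n)) Filter.atTop
      (nhds (Real.sqrt π)) := Stirling.tendsto_stirlingSeq_sqrt_pi.comp h2n
  have hst : Filter.Tendsto (fun n : ℕ => (Stirling.stirlingSeq n)^2) Filter.atTop
      (nhds ((Real.sqrt π)^2)) := Stirling.tendsto_stirlingSeq_sqrt_pi.pow 2
  have hpi := Real.pi_pos
  have hne : (Real.sqrt π)^2 ≠ 0 := by positivity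
  have hdiv := hst2.div hst hne
  rw [show Real.sqrt π / (Real.sqrt π)^2 = (Real.sqrt π)⁻¹ by
    rw [sq]; field_simp] at hdiv
  apply hdiv.congr'
  filter_upwards [Filter.eventually_ge_atTop 1] with n hn
  simp only [Pi.div_apply]
  exact (cb_stirling n hn).symm

lemma tendsto_Kseq : Filter.Tendsto Kseq Filter.atTop (nhds 1) := by
  have hfrac : Filter.Tendsto (fun n : ℕ => (n:ℝ)/((n:ℝ)+1)) Filter.atTop (nhds 1) := by
    have h := tendsto_one_div_add_atTop_nhds_zero_nat (𝕜 := ℝ)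
    have := (tendsto_const_nhds (x := (1:ℝ)) (f := Filter.atTop (α := ℕ))).sub h
    rw [sub_zero] at this
    apply this.congr
    intro n
    have : ((n:ℝ)+1) ≠ 0 := by positivity
    field_simp
    ring
  have hmain := (tendsto_cbseq.mul (tendsto_const_nhds (x := Real.sqrt π))).mul hfrac
  have hval : (Real.sqrt π)⁻¹ * Real.sqrt π * 1 = 1 := by
    field_simp
  rw [hval] at hmain
  apply hmain.congr'
  filter_upwards [Filter.eventually_ge_atTop 1] with n hn
  have hnp : (0:ℝ) < (n:ℝ) := by exact_mod_cast hn
  have hcat : ((n:ℝ)+1) * (catalan n : ℝ) = (n.centralBinom : ℝ) := by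
    exact_mod_cast succ_mul_catalan_eq_centralBinom n
  have hrpow : (n:ℝ)^((3:ℝ)/2) = (n:ℝ) * Real.sqrt n := by
    rw [show (3:ℝ)/2 = 1 + 1/2 by norm_num, Real.rpow_add hnp, Real.rpow_one,
      Real.sqrt_eq_rpow]
  unfold Kseq
  rw [hrpow]
  have h4 : ((4:ℝ)^n) ≠ 0 := by positivity
  have hn1 : ((n:ℝ)+1) ≠ 0 := by positivity
  have hcat2 : (catalan n : ℝ) = (n.centralBinom : ℝ)/((n:ℝ)+1) := by
    rw [eq_div_iff hn1]; linarith [hcat]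
  rw [hcat2]
  field_simp

lemma catalan_real_pos (n : ℕ) : (0:ℝ) < (catalan n : ℝ) := by
  exact_mod_cast catalan_pos' n

lemma tendsto_catalan_ratio :
    Filter.Tendsto (fun n : ℕ => (catalan (n+1) : ℝ) / (catalan n : ℝ))
      Filter.atTop (nhds 4) := by
  have h1 : Filter.Tendsto (fun n : ℕ => 1/((n:ℝ)+2)) Filter.atTop (nhds 0) := by
    have := (tendsto_one_div_add_atTop_nhds_zero_nat (𝕜 := ℝ)).comp (Filter.tendsto_add_atTop_nat 1)
    apply this.congr
    intro n
    simp only [Function.comp]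
    push_cast
    ring_nf
  have h2 : Filter.Tendsto (fun n : ℕ => 4 - 6 * (1/((n:ℝ)+2))) Filter.atTop (nhds 4) := by
    have := (tendsto_const_nhds (x := (4:ℝ)) (f := Filter.atTop (α := ℕ))).sub
      (h1.const_mul 6)
    simpa using this
  apply h2.congr
  intro n
  have hrec : ((n:ℝ) + 2) * (catalan (n+1) : ℝ) = (2*(2*(n:ℝ)+1)) * (catalan n : ℝ) := by
    exact_mod_cast catalan_rec n
  have hc := catalan_real_pos n
  have hn2 : ((n:ℝ)+2) ≠ 0 := by positivity
  field_simp
  linear_combination -hrec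

lemma tendsto_catalan_ratio_inv :
    Filter.Tendsto (fun n : ℕ => (catalan n : ℝ) / (catalan (n+1) : ℝ))
      Filter.atTop (nhds (4⁻¹)) := by
  have := tendsto_catalan_ratio.inv₀ (by norm_num)
  apply this.congr
  intro n
  rw [← one_div, one_div_div]

lemma tendsto_catalan_ratio_pow (k : ℕ) :
    Filter.Tendsto (fun n : ℕ => (catalan n : ℝ) / (catalan (n+k) : ℝ))
      Filter.atTop (nhds ((4:ℝ)⁻¹^k)) := by
  induction k with
  | zero =>
      simp only [Nat.add_zero, pow_zero]
      apply tendsto_const_nhds.congr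
      intro n
      rw [div_self (catalan_real_pos n).ne']
  | succ k ih =>
      have hshift : Filter.Tendsto (fun n : ℕ => (catalan (n+k) : ℝ) / (catalan (n+k+1) : ℝ))
          Filter.atTop (nhds (4⁻¹)) :=
        tendsto_catalan_ratio_inv.comp (Filter.tendsto_add_atTop_nat k)
      have := ih.mul hshift
      rw [← pow_succ] at this
      apply this.congr
      intro n
      have a := (catalan_real_pos (n+k)).ne'
      have b := (catalan_real_pos (n+k+1)).ne'
      rw [show n+(k+1) = n+k+1 from rfl]
      field_simp

lemma tendsto_catalan_sub_ratio (k : ℕ) :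
    Filter.Tendsto (fun n : ℕ => (catalan (n-k) : ℝ) / (catalan n : ℝ))
      Filter.atTop (nhds ((4:ℝ)⁻¹^k)) := by
  have := (tendsto_catalan_ratio_pow k).comp (Filter.tendsto_sub_atTop_nat k)
  apply this.congr'
  filter_upwards [Filter.eventually_ge_atTop k] with n hn
  simp only [Function.comp]
  rw [Nat.sub_add_cancel hn]

lemma alC4_pos : (0:ℝ) < alC/4 := by linarith [alC_pos]

lemma four_mul_beC : 4/alC = 4*beC := by
  rw [alC_eq_inv]
  field_simp


lemma tendsto_aa_ratio (k : ℕ) :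
    Filter.Tendsto (fun n : ℕ => myCat (alC/4) (n+1-k) / myCat (alC/4) (n+1))
      Filter.atTop (nhds (beC^k)) := by
  have h := (tendsto_catalan_sub_ratio k).mul
    (tendsto_const_nhds (x := ((4/alC):ℝ)^k) (f := Filter.atTop (α := ℕ)))
  have hval : (4:ℝ)⁻¹^k * (4/alC)^k = beC^k := by
    rw [← mul_pow]
    congr 1
    rw [alC_eq_inv]
    field_simp
  rw [hval] at h
  apply h.congr'
  filter_upwards [Filter.eventually_ge_atTop k] with n hn
  have e1 : n+1-k = (n-k)+1 := by omega
  rw [e1, myCat_succ, myCat_succ]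
  have hsplit : (alC/4)^(n+1) = (alC/4)^(n-k+1) * (alC/4)^k := by
    rw [← pow_add]
    congr 1
    omega
  rw [hsplit]
  have h1 : ((alC/4):ℝ)^(n-k+1) ≠ 0 := (pow_pos alC4_pos _).ne'
  have h2 : ((alC/4):ℝ)^k ≠ 0 := (pow_pos alC4_pos _).ne'
  have h3 := (catalan_real_pos n).ne'
  have h4 : alC ≠ 0 := alC_pos.ne'
  rw [div_pow]
  field_simp
  have h5 : (1/4:ℝ)^k * 4^k = 1 := by rw [← mul_pow]; norm_num
  linear_combination ((catalan (n - k) : ℝ) * alC ^ k) * h5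


lemma myCat_abs_le (c : ℝ) (hc : 0 ≤ c) (k : ℕ) : |myCat c k| ≤ 2 * (4*c)^k := by
  match k with
  | 0 => simp
  | (j+1) =>
      rw [myCat_succ]
      have hcat : (catalan j : ℝ) ≤ 4^j := by exact_mod_cast catalan_le_four_pow j
      have hcp : (0:ℝ) ≤ c^(j+1) := by positivity
      have : |(-2 : ℝ) * (catalan j) * c^(j+1)| = 2 * (catalan j : ℝ) * c^(j+1) := by
        rw [abs_mul, abs_mul]
        rw [abs_of_nonneg hcp, abs_of_nonneg (by positivity : (0:ℝ) ≤ (catalan j:ℝ))]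
        norm_num
      rw [this]
      have h1 : 2 * (catalan j : ℝ) * c^(j+1) ≤ 2 * 4^j * c^(j+1) := by
        apply mul_le_mul_of_nonneg_right _ hcp
        nlinarith
      refine h1.trans ?_
      have h2 : (4*c)^(j+1) = 4^(j+1) * c^(j+1) := by rw [mul_pow]
      rw [h2]
      have hx : (0:ℝ) ≤ 4^j * c^(j+1) := by positivity
      calc 2 * 4^j * c^(j+1) = 2 * (4^j * c^(j+1)) := by ring
        _ ≤ 8 * (4^j * c^(j+1)) := by linarith
        _ = 2 * (4^(j+1) * c^(j+1)) := by ring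

lemma one_le_catalan_real (n : ℕ) : (1:ℝ) ≤ (catalan n : ℝ) := by
  exact_mod_cast catalan_pos' n

lemma myCat_al_abs_le (n m : ℕ) (hm : m ≤ n+1) :
    |myCat (alC/4) m| ≤ 2 * (catalan n : ℝ) * (alC/4)^m := by
  match m with
  | 0 => simpa using by nlinarith [one_le_catalan_real n]
  | (j+1) =>
      rw [myCat_succ]
      have hcp : (0:ℝ) ≤ (alC/4)^(j+1) := (pow_pos alC4_pos _).le
      have hmono : (catalan j : ℝ) ≤ (catalan n : ℝ) := by
        exact_mod_cast catalan_monotone' (show j ≤ n by omega)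
      have : |(-2 : ℝ) * (catalan j) * (alC/4)^(j+1)| = 2 * (catalan j : ℝ) * (alC/4)^(j+1) := by
        rw [abs_mul, abs_mul, abs_of_nonneg hcp,
          abs_of_nonneg (by positivity : (0:ℝ) ≤ (catalan j:ℝ))]
        norm_num
      rw [this]
      nlinarith

lemma myCat_al_ne (n : ℕ) : myCat (alC/4) (n+1) ≠ 0 := by
  rw [myCat_succ]
  have := catalan_real_pos n
  have := pow_pos alC4_pos (n+1)
  nlinarith

lemma aa_ratio_abs_le (n k : ℕ) (hk : k ≤ n+1) :
    |myCat (alC/4) (n+1-k) / myCat (alC/4) (n+1)| ≤ (4*beC)^k := by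
  have hden : |myCat (alC/4) (n+1)| = 2 * (catalan n : ℝ) * (alC/4)^(n+1) := by
    rw [myCat_succ, abs_mul, abs_mul, abs_of_nonneg (pow_pos alC4_pos _).le,
      abs_of_nonneg (by positivity : (0:ℝ) ≤ (catalan n:ℝ))]
    norm_num
  have hdenpos : (0:ℝ) < 2 * (catalan n : ℝ) * (alC/4)^(n+1) := by
    have := catalan_real_pos n
    have := pow_pos alC4_pos (n+1)
    positivity
  rw [abs_div, hden, div_le_iff₀ hdenpos]
  have hnum := myCat_al_abs_le n (n+1-k) (by omega)
  refine hnum.trans ?_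
  have hkey : (4*beC)^k * (2 * (catalan n : ℝ) * (alC/4)^(n+1))
      = 2 * (catalan n : ℝ) * (alC/4)^(n+1-k) := by
    have hsplit : (alC/4)^(n+1) = (alC/4)^(n+1-k) * (alC/4)^k := by
      rw [← pow_add]; congr 1; omega
    have hone : (4*beC)^k * (alC/4)^k = 1 := by
      rw [← mul_pow, show (4*beC) * (alC/4) = alC*beC by ring, alC_mul_beC, one_pow]
    rw [hsplit]
    calc (4*beC)^k * (2 * (catalan n : ℝ) * ((alC/4)^(n+1-k) * (alC/4)^k))
        = (2 * (catalan n : ℝ) * (alC/4)^(n+1-k)) * ((4*beC)^k * (alC/4)^k) := by ring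
      _ = _ := by rw [hone, mul_one]
  rw [hkey]

lemma beC4_lt_one : 4*beC^2 < 1 := by
  have h1 := beC_pos
  have h2 := beC_lt_half
  nlinarith

lemma beC4_nonneg : 0 ≤ 4*beC^2 := by positivity

noncomputable def fDC (n k : ℕ) : ℝ :=
  if k ≤ n+1 then myCat (beC/4) k * (myCat (alC/4) (n+1-k) / myCat (alC/4) (n+1)) else 0

noncomputable def T0 : ℝ := ∑' k, myCat (beC/4) k * beC^k

lemma fDC_bound (n k : ℕ) : ‖fDC n k‖ ≤ 2 * (4*beC^2)^k := by
  unfold fDC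
  split_ifs with h
  · rw [Real.norm_eq_abs, abs_mul]
    have h1 := myCat_abs_le (beC/4) (by linarith [beC_pos]) k
    have h2 := aa_ratio_abs_le n k h
    have hb : (4 * (beC/4)) = beC := by ring
    rw [hb] at h1
    calc |myCat (beC/4) k| * |myCat (alC/4) (n+1-k) / myCat (alC/4) (n+1)|
        ≤ (2 * beC^k) * (4*beC)^k := by
          apply mul_le_mul h1 h2 (abs_nonneg _)
            (by nlinarith [pow_nonneg beC_pos.le k])
      _ = 2 * (4*beC^2)^k := by
          rw [show (4:ℝ)*beC^2 = beC * (4*beC) by ring, mul_pow _ _ k]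
          ring
  · rw [norm_zero]
    positivity

lemma fDC_tendsto (k : ℕ) :
    Filter.Tendsto (fun n => fDC n k) Filter.atTop (nhds (myCat (beC/4) k * beC^k)) := by
  have := (tendsto_aa_ratio k).const_mul (myCat (beC/4) k)
  apply this.congr'
  filter_upwards [Filter.eventually_ge_atTop k] with n hn
  unfold fDC
  rw [if_pos (by omega)]

lemma summable_bound : Summable (fun k : ℕ => 2 * (4*beC^2)^k) :=
  (summable_geometric_of_lt_one beC4_nonneg beC4_lt_one).mul_left 2

lemma tsum_fDC_eq (n : ℕ) : (∑' k, fDC n k) = SSum n / myCat (alC/4) (n+1) := by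
  rw [tsum_eq_sum (s := Finset.range (n+2)) (fun k hk => by
    unfold fDC
    rw [if_neg]
    simp only [Finset.mem_range] at hk
    omega)]
  unfold fDC SSum
  rw [Finset.sum_div]
  apply Finset.sum_congr rfl
  intro k hk
  simp only [Finset.mem_range] at hk
  rw [if_pos (by omega), mul_div_assoc]

lemma tendsto_L :
    Filter.Tendsto (fun n => SSum n / myCat (alC/4) (n+1)) Filter.atTop (nhds T0) := by
  have := tendsto_tsum_of_dominated_convergence (𝓕 := Filter.atTop)
    (f := fDC) (g := fun k => myCat (beC/4) k * beC^k) (bound := fun k => 2 * (4*beC^2)^k)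
    summable_bound fDC_tendsto (Filter.Eventually.of_forall (fun n k => fDC_bound n k))
  unfold T0
  apply this.congr
  intro n
  exact tsum_fDC_eq n

lemma gT_abs (k : ℕ) : ‖myCat (beC/4) k * beC^k‖ ≤ 2 * (beC^2)^k := by
  rw [Real.norm_eq_abs, abs_mul]
  have h1 := myCat_abs_le (beC/4) (by linarith [beC_pos]) k
  rw [show (4:ℝ) * (beC/4) = beC by ring] at h1
  have h2 : |beC^k| = beC^k := abs_of_nonneg (pow_nonneg beC_pos.le k)
  rw [h2]
  calc |myCat (beC/4) k| * beC^k ≤ (2*beC^k) * beC^k := by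
        apply mul_le_mul_of_nonneg_right h1 (pow_nonneg beC_pos.le k)
    _ = 2 * (beC^2)^k := by rw [show beC^2 = beC*beC by ring, mul_pow]; ring

lemma beC_sq_lt : beC^2 < 1/4 := by nlinarith [beC_pos, beC_lt_half]

lemma summable_gT_norm : Summable (fun k : ℕ => ‖myCat (beC/4) k * beC^k‖) := by
  apply Summable.of_nonneg_of_le (fun k => norm_nonneg _) gT_abs
  apply Summable.mul_left 2
  apply summable_geometric_of_lt_one (by positivity)
  nlinarith [beC_sq_lt]

lemma summable_gT : Summable (fun k : ℕ => myCat (beC/4) k * beC^k) :=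
  summable_gT_norm.of_norm

lemma coeff_Bsq (m : ℕ) :
    ∑ kl ∈ Finset.HasAntidiagonal.antidiagonal m, myCat (beC/4) kl.1 * myCat (beC/4) kl.2
      = PowerSeries.coeff m ((1 : PowerSeries ℝ) - PowerSeries.C beC * X) := by
  have := myCat_sq (beC/4)
  rw [show (4:ℝ) * (beC/4) = beC by ring] at this
  rw [← this, sq, PowerSeries.coeff_mul]
  simp [coeff_mk]

lemma T0_sq : T0 * T0 = 1 - beC^2 := by
  unfold T0
  rw [tsum_mul_tsum_eq_tsum_sum_antidiagonal_of_summable_norm summable_gT_norm summable_gT_norm]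
  have hterm : ∀ m : ℕ, (∑ kl ∈ Finset.HasAntidiagonal.antidiagonal m,
      (myCat (beC/4) kl.1 * beC^kl.1) * (myCat (beC/4) kl.2 * beC^kl.2))
      = PowerSeries.coeff m ((1:PowerSeries ℝ) - PowerSeries.C beC * X) * beC^m := by
    intro m
    rw [← coeff_Bsq m, Finset.sum_mul]
    apply Finset.sum_congr rfl
    intro kl hkl
    rw [Finset.HasAntidiagonal.mem_antidiagonal] at hkl
    rw [← hkl, pow_add]
    ring
  rw [tsum_congr hterm]
  rw [tsum_eq_sum (s := Finset.range 2) (fun m hm => by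
    simp only [Finset.mem_range] at hm
    have h1 : m ≠ 0 := by omega
    have h2 : m ≠ 1 := by omega
    rw [map_sub, PowerSeries.coeff_one, PowerSeries.coeff_C_mul, PowerSeries.coeff_X,
      if_neg h1, if_neg h2]
    simp)]
  rw [Finset.sum_range_succ, Finset.sum_range_one]
  rw [map_sub, map_sub, PowerSeries.coeff_one, PowerSeries.coeff_one,
    PowerSeries.coeff_C_mul, PowerSeries.coeff_C_mul, PowerSeries.coeff_X, PowerSeries.coeff_X]
  norm_num
  ring

lemma T0_pos : 0 < T0 := by
  have hsplit : T0 = myCat (beC/4) 0 * beC^0 + ∑' k, myCat (beC/4) (k+1) * beC^(k+1) := by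
    unfold T0
    exact summable_gT.tsum_eq_zero_add
  have htail : |∑' k, myCat (beC/4) (k+1) * beC^(k+1)| ≤ 2/3 := by
    have hb : ∀ k : ℕ, ‖myCat (beC/4) (k+1) * beC^(k+1)‖ ≤ (1/2) * (1/4)^k := by
      intro k
      refine (gT_abs (k+1)).trans ?_
      have h1 : (beC^2)^(k+1) ≤ (1/4:ℝ)^(k+1) :=
        pow_le_pow_left₀ (by positivity) (le_of_lt beC_sq_lt) (k+1)
      calc 2 * (beC^2)^(k+1) ≤ 2 * (1/4:ℝ)^(k+1) := by linarith
        _ = (1/2) * (1/4)^k := by rw [pow_succ]; ring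
    have hsum : Summable (fun k : ℕ => myCat (beC/4) (k+1) * beC^(k+1)) :=
      summable_gT.comp_injective (add_left_injective 1)
    have hbs : Summable (fun k : ℕ => (1/2:ℝ) * (1/4)^k) :=
      (summable_geometric_of_lt_one (by norm_num) (by norm_num)).mul_left _
    calc |∑' k, myCat (beC/4) (k+1) * beC^(k+1)|
        ≤ ∑' k, ‖myCat (beC/4) (k+1) * beC^(k+1)‖ := norm_tsum_le_tsum_norm (by
            apply Summable.of_nonneg_of_le (fun k => norm_nonneg _) hb hbs)
      _ ≤ ∑' k : ℕ, (1/2:ℝ) * (1/4)^k := Summable.tsum_le_tsum hb (by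
            apply Summable.of_nonneg_of_le (fun k => norm_nonneg _) hb hbs) hbs
      _ = (1/2) * (1-1/4)⁻¹ := by
            rw [tsum_mul_left, tsum_geometric_of_lt_one (by norm_num) (by norm_num)]
      _ = 2/3 := by norm_num
  rw [hsplit]
  simp only [myCat_zero, pow_zero, one_mul]
  have := abs_le.mp htail
  linarith [this.1]

lemma T0_eq : T0 = Real.sqrt (1 - beC^2) := by
  rw [show (1:ℝ) - beC^2 = T0 * T0 from T0_sq.symm, Real.sqrt_mul_self T0_pos.le]

noncomputable def Dden (n : ℕ) : ℝ :=
  (1/2) * Real.sqrt (2*Real.sqrt 8) / (2*Real.sqrt π) * (3 - Real.sqrt 8) ^ (-(n:ℝ) - 1/2)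
    * (n:ℝ)^(-(3:ℝ)/2)

lemma rpow_be (n : ℕ) : (3 - Real.sqrt 8) ^ (-(n:ℝ) - 1/2) = alC^n * Real.sqrt alC := by
  have hbe : (3 - Real.sqrt 8) = beC := rfl
  rw [hbe, show -(n:ℝ) - 1/2 = -((n:ℝ) + 1/2) by ring, Real.rpow_neg beC_pos.le,
    Real.rpow_add beC_pos, Real.rpow_natCast, ← Real.sqrt_eq_rpow, mul_inv,
    ← inv_pow, ← Real.sqrt_inv, ← alC_eq_inv]

lemma rpow_n32 (n : ℕ) : (n:ℝ)^(-(3:ℝ)/2) = ((n:ℝ)^((3:ℝ)/2))⁻¹ := by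
  rw [show -(3:ℝ)/2 = -((3:ℝ)/2) by ring, Real.rpow_neg (Nat.cast_nonneg n)]

lemma ratio_eq (n : ℕ) (hn : 1 ≤ n) :
    (-(1/2) * myCat (alC/4) (n+1)) / Dden n
      = Kseq n * (Real.sqrt alC / Real.sqrt (2*Real.sqrt 8)) := by
  have hnp : (0:ℝ) < (n:ℝ) := by exact_mod_cast hn
  have hn32 : (0:ℝ) < (n:ℝ)^((3:ℝ)/2) := Real.rpow_pos_of_pos hnp _
  unfold Dden Kseq
  rw [myCat_succ, rpow_be, rpow_n32]
  have hs8 : (0:ℝ) < Real.sqrt 8 := Real.sqrt_pos.mpr (by norm_num)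
  have hs28 : (0:ℝ) < Real.sqrt (2*Real.sqrt 8) := Real.sqrt_pos.mpr (by linarith)
  have hsal : (0:ℝ) < Real.sqrt alC := Real.sqrt_pos.mpr alC_pos
  have hspi := sqrtPi_pos
  have h4n : (0:ℝ) < (4:ℝ)^n := by positivity
  have hcat := catalan_real_pos n
  set a := Real.sqrt alC with hadef
  have hal : alC = a*a := (Real.mul_self_sqrt alC_pos.le).symm
  rw [hal]
  have hapos : 0 < a := hsal
  have han : (0:ℝ) < (a*a)^n := pow_pos (by nlinarith) n
  field_simp
  have h5 : (1/4:ℝ)^n * 4^n = 1 := by rw [← mul_pow]; norm_num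
  linear_combination (a^2 * a^(n*2)) * h5

lemma final_const : Real.sqrt alC / Real.sqrt (2*Real.sqrt 8) * T0 = 1 := by
  have hs8 : (0:ℝ) < Real.sqrt 8 := Real.sqrt_pos.mpr (by norm_num)
  have hs28 : (0:ℝ) < Real.sqrt (2*Real.sqrt 8) := Real.sqrt_pos.mpr (by linarith)
  rw [T0_eq, div_mul_eq_mul_div, ← Real.sqrt_mul alC_pos.le,
    show alC*(1-beC^2) = 2*Real.sqrt 8 by
      linear_combination alC_sub_beC - beC * alC_mul_beC,
    div_self hs28.ne']

lemma tendsto_final :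
    Filter.Tendsto (fun n : ℕ => (-(1/2) * SSum n) / Dden n) Filter.atTop (nhds 1) := by
  have hlim1 : Filter.Tendsto (fun n : ℕ => (-(1/2) * myCat (alC/4) (n+1)) / Dden n)
      Filter.atTop (nhds (Real.sqrt alC / Real.sqrt (2*Real.sqrt 8))) := by
    have := tendsto_Kseq.mul_const (Real.sqrt alC / Real.sqrt (2*Real.sqrt 8))
    rw [one_mul] at this
    apply this.congr'
    filter_upwards [Filter.eventually_ge_atTop 1] with n hn
    exact (ratio_eq n hn).symm
  have htot := hlim1.mul tendsto_L
  rw [final_const] at htot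
  apply htot.congr
  intro n
  have haaN := myCat_al_ne n
  rw [div_mul_div_comm, show (-(1/2) * myCat (alC/4) (n+1)) * SSum n
    = (-(1/2) * SSum n) * myCat (alC/4) (n+1) by ring,
    mul_div_mul_right _ _ haaN]


theorem stmt9 (s E : PowerSeries ℝ)
    (hs : s ^ 2 = 1 - 6 * X + X ^ 2)
    (hs0 : constantCoeff (R := ℝ) s = 1)
    (hE : 2 * X * E = 1 - X - s) :
    Filter.Tendsto
      (fun n : ℕ =>
        coeff (R := ℝ) n E /
          ((1 / 2) * Real.sqrt (2 * Real.sqrt 8) / (2 * Real.sqrt Real.pi) *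
            (3 - Real.sqrt 8) ^ (-(n : ℝ) - 1 / 2) * (n : ℝ) ^ (-(3 : ℝ) / 2)))
      Filter.atTop (nhds 1) := by
  rw [s_eq s hs hs0] at hE
  apply tendsto_final.congr'
  filter_upwards [Filter.eventually_ge_atTop 1] with n hn
  rw [← coeff_E_eq E hE n hn]
  rfl
end

section
/- The number of Schröder paths of semilength n with exactly k ascents, summed as sum_k c(n,k) v^k x^n over all n and k, gives the unique formal power series solution with constant term 1 of the equation E = 1 + xvE + x(1+x(v-1))E^2; in particular the coefficient polynomials h_n(v) = sum_k c(n,k) v^k satisfy h_n(1) = r_n (the n-th large Schröder number) and h_n(0) = 1 for all n ≥ 0. -/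
open PowerSeries

/-- The polynomial `h_n(v) = ∑_k c(n,k) v^k` counting Schröder paths of semilength `n`
by number of ascents (a path of semilength `n` has at most `n` ascents). -/
noncomputable def hpoly (n : ℕ) : Polynomial ℚ :=
  ∑ k ∈ Finset.range (n + 1), Polynomial.C (ascCount n k : ℚ) * Polynomial.X ^ k

namespace Aux

@[simp] lemma pathLen_nil : pathLen [] = 0 := rfl
@[simp] lemma pathAlt_nil : pathAlt [] = 0 := rfl
@[simp] lemma pathLen_cons (a : Step) (w : List Step) : pathLen (a :: w) = a.len + pathLen w := by
  simp [pathLen]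
@[simp] lemma pathAlt_cons (a : Step) (w : List Step) : pathAlt (a :: w) = a.alt + pathAlt w := by
  simp [pathAlt]
@[simp] lemma pathLen_append (w1 w2 : List Step) : pathLen (w1 ++ w2) = pathLen w1 + pathLen w2 := by
  simp [pathLen]
@[simp] lemma pathAlt_append (w1 w2 : List Step) : pathAlt (w1 ++ w2) = pathAlt w1 + pathAlt w2 := by
  simp [pathAlt]

lemma parity (w : List Step) : (pathLen w : ℤ) % 2 = pathAlt w % 2 := by
  induction w with
  | nil => simp
  | cons a t ih =>
    simp only [pathLen_cons, pathAlt_cons, Nat.cast_add, Int.add_mul_emod_self_left]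
    cases a <;> simp [Step.len, Step.alt, Int.add_emod, ih]

lemma even_pathLen {w : List Step} (h : pathAlt w = 0) : ∃ i, pathLen w = 2 * i := by
  have := parity w
  rw [h] at this
  have : (2:ℤ) ∣ (pathLen w : ℤ) := Int.dvd_of_emod_eq_zero (by omega)
  have h2 : 2 ∣ pathLen w := by exact_mod_cast this
  exact ⟨pathLen w / 2, (Nat.mul_div_cancel' h2).symm⟩

lemma ascents_cons (a : Step) (t : List Step) :
    ascents (a :: t) = (if a = Step.U ∧ t.head? ≠ some Step.U then 1 else 0) + ascents t := by
  unfold ascents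
  rw [List.length_cons, List.range_succ_eq_map, List.countP_cons, List.countP_map]
  have h1 : ((fun i => decide ((a :: t)[i]? = some Step.U ∧ (a :: t)[i+1]? ≠ some Step.U)) ∘ Nat.succ)
      = (fun i => decide (t[i]? = some Step.U ∧ t[i+1]? ≠ some Step.U)) := by
    funext i; simp
  rw [h1]
  have h2 : t[0]? = t.head? := by cases t <;> rfl
  have h3 : t[0]? = t.head? := by cases t <;> simp
  simp [h2, h3, add_comm]

@[simp] lemma ascents_nil : ascents [] = 0 := rfl

def ascB (t : List Step) : ℕ := if t.head? = some Step.U then 0 else 1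

lemma ascents_F_cons (t : List Step) : ascents (Step.F :: t) = ascents t := by
  rw [ascents_cons]; simp

lemma ascents_append_D (w1 w2 : List Step) :
    ascents (w1 ++ Step.D :: w2) = ascents w1 + ascents w2 := by
  induction w1 with
  | nil =>
    simp only [List.nil_append, ascents_cons]
    simp
  | cons a t ih =>
    rw [List.cons_append, ascents_cons, ih, ascents_cons]
    rcases t with _ | ⟨b, t'⟩ <;> simp <;> ring

lemma ascents_U (w1 w2 : List Step) :
    ascents (Step.U :: (w1 ++ Step.D :: w2)) = ascB w1 + ascents w1 + ascents w2 := by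
  rw [ascents_cons, ascents_append_D, ascB]
  rcases w1 with _ | ⟨b, t⟩
  · simp
  · rcases b <;> simp <;> ring

lemma count_le_of_ascents (w : List Step) : ascents w ≤ w.count Step.U := by
  induction w with
  | nil => simp
  | cons a t ih =>
    rw [ascents_cons, List.count_cons]
    split
    · next h => simp [h.1]; omega
    · omega

lemma pathAlt_eq_count (w : List Step) :
    pathAlt w = (w.count Step.U : ℤ) - w.count Step.D := by
  induction w with
  | nil => simp
  | cons a t ih => rw [pathAlt_cons, ih, List.count_cons, List.count_cons]; cases a <;> simp [Step.alt] <;> ring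

lemma pathLen_eq_count (w : List Step) :
    pathLen w = w.count Step.U + w.count Step.D + 2 * w.count Step.F := by
  induction w with
  | nil => simp
  | cons a t ih => rw [pathLen_cons, ih, List.count_cons, List.count_cons, List.count_cons]; cases a <;> simp [Step.len] <;> ring

lemma ascents_le {n : ℕ} {w : List Step} (h : IsSchroeder n w) : ascents w ≤ n := by
  have h1 := count_le_of_ascents w
  have h2 := pathAlt_eq_count w
  have h3 := pathLen_eq_count w
  rw [h.2.1] at h2
  rw [h.1] at h3
  omega
instance : Fintype Step :=
  ⟨⟨{Step.U, Step.D, Step.F}, by decide⟩, by intro x; cases x <;> decide⟩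

lemma length_le_pathLen (w : List Step) : w.length ≤ pathLen w := by
  induction w with
  | nil => simp
  | cons a t ih => rw [pathLen_cons]; cases a <;> simp [Step.len] <;> omega

lemma schroeder_finite (n : ℕ) : {w : List Step | IsSchroeder n w}.Finite := by
  apply Set.Finite.subset (List.finite_length_le Step (2*n))
  intro w hw
  simp only [Set.mem_setOf_eq] at hw ⊢
  calc w.length ≤ pathLen w := length_le_pathLen w
  _ = 2 * n := hw.1

noncomputable def S (n : ℕ) : Finset (List Step) := (schroeder_finite n).toFinset

lemma mem_S {n : ℕ} {w : List Step} : w ∈ S n ↔ IsSchroeder n w := by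
  simp [S]

lemma prefix_append_cases {p l1 l2 : List Step} (h : p <+: l1 ++ l2) :
    p <+: l1 ∨ ∃ r, r <+: l2 ∧ p = l1 ++ r := by
  rcases le_or_gt p.length l1.length with hle | hlt
  · left
    rw [List.prefix_iff_eq_take] at h
    rw [h, List.take_append_of_le_length hle]
    exact List.take_prefix _ _
  · right
    refine ⟨l2.take (p.length - l1.length), List.take_prefix _ _, ?_⟩
    conv_lhs => rw [List.prefix_iff_eq_take.mp h]
    rw [List.take_append, List.take_of_length_le (by omega)]

lemma prefix_of_prefix_append {p l1 l2 : List Step} (h : p <+: l1 ++ l2)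
    (hl : p.length ≤ l1.length) : p <+: l1 := by
  rw [List.prefix_iff_eq_take] at h
  rw [h, List.take_append_of_le_length hl]
  exact List.take_prefix _ _

lemma isSchroeder_F_cons {n : ℕ} {w : List Step} (h : IsSchroeder n w) :
    IsSchroeder (n + 1) (Step.F :: w) := by
  obtain ⟨h1, h2, h3⟩ := h
  refine ⟨by simp [h1, Step.len]; ring, by simp [h2, Step.alt], ?_⟩
  intro p hp
  rcases List.prefix_cons_iff.mp hp with rfl | ⟨t, rfl, ht⟩
  · simp
  · simpa [Step.alt] using h3 t ht

lemma isSchroeder_UD {i j : ℕ} {w1 w2 : List Step} (h1 : IsSchroeder i w1)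
    (h2 : IsSchroeder j w2) : IsSchroeder (i + j + 1) (Step.U :: w1 ++ Step.D :: w2) := by
  obtain ⟨ha, hb, hc⟩ := h1
  obtain ⟨hd, he, hf⟩ := h2
  refine ⟨?_, ?_, ?_⟩
  · simp [ha, hd, Step.len]; ring
  · simp [hb, he, Step.alt]
  · intro p hp
    rcases List.prefix_cons_iff.mp hp with rfl | ⟨t, rfl, ht⟩
    · simp
    rcases prefix_append_cases ht with hq | ⟨r, hr, rfl⟩
    · have := hc t hq
      simp [Step.alt]; omega
    rcases List.prefix_cons_iff.mp hr with rfl | ⟨s, rfl, hs⟩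
    · simp [hb, Step.alt]
    · have := hf s hs
      simp [hb, Step.alt]; omega

lemma schroeder_decomp {n : ℕ} {w : List Step} (h : IsSchroeder (n + 1) w) :
    (∃ w', w = Step.F :: w' ∧ IsSchroeder n w') ∨
    (∃ i j w1 w2, i + j = n ∧ w = Step.U :: w1 ++ Step.D :: w2 ∧
      IsSchroeder i w1 ∧ IsSchroeder j w2) := by
  obtain ⟨h1, h2, h3⟩ := h
  match w with
  | [] => simp at h1
  | Step.D :: t =>
    have := h3 [Step.D] ⟨t, rfl⟩
    simp [Step.alt] at this
  | Step.F :: t =>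
    left
    refine ⟨t, rfl, ?_, ?_, ?_⟩
    · simp [Step.len] at h1; omega
    · simpa [Step.alt] using h2
    · intro p hp
      have := h3 (Step.F :: p) (List.cons_prefix_cons.mpr ⟨rfl, hp⟩)
      simpa [Step.alt] using this
  | Step.U :: t =>
    right
    -- every prefix of t has altitude ≥ -1
    have hpre : ∀ q : List Step, q <+: t → -1 ≤ pathAlt q := by
      intro q hq
      have := h3 (Step.U :: q) (List.cons_prefix_cons.mpr ⟨rfl, hq⟩)
      simp [Step.alt] at this; omega
    have haltt : pathAlt t = -1 := by simp [Step.alt] at h2; omega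
    have hex : ∃ k, pathAlt (t.take k) = -1 := ⟨t.length, by simp [haltt]⟩
    set k0 := Nat.find hex with hk0
    have hk0spec : pathAlt (t.take k0) = -1 := Nat.find_spec hex
    have hk0min : ∀ m, m < k0 → pathAlt (t.take m) ≠ -1 := fun m hm => Nat.find_min hex hm
    have hk0pos : 1 ≤ k0 := by
      by_contra hcon
      have : k0 = 0 := by omega
      rw [this] at hk0spec; simp at hk0spec
    have hk0le : k0 ≤ t.length := Nat.find_min' hex (by simp [haltt])
    clear_value k0
    obtain ⟨m, rfl⟩ : ∃ m, k0 = m + 1 := ⟨k0 - 1, by omega⟩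
    have hmlt : m < t.length := by omega
    have htake : t.take (m+1) = t.take m ++ [t[m]] := by
      rw [List.take_succ]; simp [List.getElem?_eq_getElem hmlt]
    set w1 : List Step := t.take m with hw1
    have hw1alt_ge : -1 ≤ pathAlt w1 := hpre _ (List.take_prefix _ _)
    have hw1alt_ne : pathAlt w1 ≠ -1 := hk0min m (by omega)
    have hstep : pathAlt w1 + (t[m]).alt = -1 := by
      have := hk0spec
      rw [htake] at this; simp at this; omega
    have hD : t[m] = Step.D := by
      cases hs : t[m]
      · exfalso; rw [hs] at hstep; simp [Step.alt] at hstep; omega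
      · rfl
      · exfalso; rw [hs] at hstep; simp [Step.alt] at hstep; exact hw1alt_ne hstep
    have hw1alt : pathAlt w1 = 0 := by rw [hD] at hstep; simp [Step.alt] at hstep; omega
    set w2 : List Step := t.drop (m+1) with hw2
    have hsplit : t = w1 ++ Step.D :: w2 := by
      conv_lhs => rw [← List.take_append_drop (m+1) t]
      rw [htake, hD, hw1, hw2]; simp
    -- w1 is Schroeder
    have hw1pre : ∀ p : List Step, p <+: w1 → 0 ≤ pathAlt p := by
      intro p hp
      rw [List.prefix_iff_eq_take] at hp
      have hplen : p.length ≤ m := by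
        have := hp ▸ (List.length_take (i := p.length) (l := w1))
        have h' : w1.length ≤ m := by simp [hw1]
        calc p.length = min p.length w1.length := by
              conv_lhs => rw [hp]
              simp
        _ ≤ w1.length := min_le_right _ _
        _ ≤ m := h'
      have hpt : p = t.take (min p.length m) := by
        conv_lhs => rw [hp, hw1, List.take_take]
      have hge := hpre p (by rw [hpt]; exact List.take_prefix _ _)
      have hne := hk0min (min p.length m) (by omega)
      rw [← hpt] at hne
      omega
    have hw1even := even_pathLen hw1alt
    obtain ⟨i, hi⟩ := hw1even
    have hw1S : IsSchroeder i w1 := ⟨hi, hw1alt, hw1pre⟩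
    -- w2 is Schroeder
    have hw2alt : pathAlt w2 = 0 := by
      have := haltt
      rw [hsplit] at this
      simp [Step.alt, hw1alt] at this
      omega
    have hw2pre : ∀ r : List Step, r <+: w2 → 0 ≤ pathAlt r := by
      intro r hr
      have hpr : Step.U :: w1 ++ Step.D :: r <+: Step.U :: t := by
        rw [hsplit]
        apply List.cons_prefix_cons.mpr ⟨rfl, ?_⟩
        obtain ⟨s, hs⟩ := hr
        exact ⟨s, by rw [← hs]; simp⟩
      have := h3 _ hpr
      simp [Step.alt, hw1alt] at this
      omega
    have hlen2 : pathLen w2 = 2 * (n - i) ∧ i ≤ n := by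
      have := h1
      rw [hsplit] at this
      simp [Step.len, hi] at this
      omega
    exact ⟨i, n - i, w1, w2, by omega, by rw [hsplit]; simp, hw1S, ⟨hlen2.1, hw2alt, hw2pre⟩⟩

lemma unique_decomp {i i' : ℕ} {w1 w1' w2 w2' : List Step}
    (h1 : IsSchroeder i w1) (h1' : IsSchroeder i' w1')
    (he : w1 ++ Step.D :: w2 = w1' ++ Step.D :: w2') : w1 = w1' ∧ w2 = w2' := by
  have key : ∀ {a a' b b' : List Step} {ja ja' : ℕ}, IsSchroeder ja a → IsSchroeder ja' a' →
      a ++ Step.D :: b = a' ++ Step.D :: b' → a.length < a'.length → False := by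
    intro a a' b b' ja ja' ha ha' heq hlt
    have hp : a ++ [Step.D] <+: a' := by
      apply prefix_of_prefix_append (l2 := Step.D :: b')
      · rw [← heq]; exact ⟨b, by simp⟩
      · simp; omega
    have := ha'.2.2 _ hp
    simp [Step.alt, ha.2.1] at this
  rcases lt_trichotomy w1.length w1'.length with hlt | heq' | hgt
  · exact absurd (key h1 h1' he hlt) (by simp)
  · have := List.append_inj he heq'
    exact ⟨this.1, by simpa using this.2⟩
  · exact absurd (key h1' h1 he.symm hgt) (by simp)

noncomputable def f (w : List Step) : Polynomial ℚ := Polynomial.X ^ ascents w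

noncomputable def hp (n : ℕ) : Polynomial ℚ := ∑ w ∈ S n, f w

lemma S_succ (n : ℕ) :
    S (n+1) = (S n).image (Step.F :: ·) ∪
      (Finset.HasAntidiagonal.antidiagonal n).biUnion
        (fun p => ((S p.1 ×ˢ S p.2)).image (fun q => Step.U :: q.1 ++ Step.D :: q.2)) := by
  ext w
  simp only [Finset.mem_union, Finset.mem_image, Finset.mem_biUnion, Finset.mem_product,
    Finset.HasAntidiagonal.mem_antidiagonal, mem_S, Prod.exists]
  constructor
  · intro hw
    rcases schroeder_decomp hw with ⟨w', rfl, h⟩ | ⟨i, j, w1, w2, hij, rfl, hs1, hs2⟩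
    · exact Or.inl ⟨w', h, rfl⟩
    · exact Or.inr ⟨i, j, hij, w1, w2, ⟨hs1, hs2⟩, rfl⟩
  · rintro (⟨w', h, rfl⟩ | ⟨i, j, hij, w1, w2, ⟨hs1, hs2⟩, rfl⟩)
    · exact isSchroeder_F_cons h
    · have := isSchroeder_UD hs1 hs2
      rwa [show i + j + 1 = n + 1 by omega] at this

lemma hp_succ (n : ℕ) :
    hp (n+1) = hp n + ∑ p ∈ Finset.HasAntidiagonal.antidiagonal n,
      (∑ w1 ∈ S p.1, Polynomial.X ^ ascB w1 * f w1) * hp p.2 := by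
  have hdisj : Disjoint ((S n).image (Step.F :: ·))
      ((Finset.HasAntidiagonal.antidiagonal n).biUnion
        (fun p => ((S p.1 ×ˢ S p.2)).image (fun q => Step.U :: q.1 ++ Step.D :: q.2))) := by
    rw [Finset.disjoint_left]
    rintro w hw1 hw2
    simp only [Finset.mem_image, Finset.mem_biUnion, Finset.mem_product, Prod.exists] at hw1 hw2
    obtain ⟨a, _, rfl⟩ := hw1
    obtain ⟨p, _, w1, w2, _, heq⟩ := hw2
    simp at heq
  have hpd : (↑(Finset.HasAntidiagonal.antidiagonal n) : Set (ℕ × ℕ)).PairwiseDisjoint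
      (fun p => ((S p.1 ×ˢ S p.2)).image (fun q => Step.U :: q.1 ++ Step.D :: q.2)) := by
    intro p hp' q hq' hpq
    simp only [Finset.mem_coe, Finset.HasAntidiagonal.mem_antidiagonal] at hp' hq'
    rw [Function.onFun, Finset.disjoint_left]
    rintro w hw1 hw2
    simp only [Finset.mem_image, Finset.mem_product, Prod.exists] at hw1 hw2
    obtain ⟨a1, a2, ⟨ha1, ha2⟩, heq1⟩ := hw1
    obtain ⟨b1, b2, ⟨hb1, hb2⟩, heq2⟩ := hw2
    rw [← heq2] at heq1
    simp only [List.cons_append, List.cons.injEq, true_and] at heq1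
    obtain ⟨hab, -⟩ := unique_decomp (mem_S.mp ha1) (mem_S.mp hb1) heq1
    apply hpq
    have : 2 * p.1 = 2 * q.1 := by
      rw [← (mem_S.mp ha1).1, ← (mem_S.mp hb1).1, hab]
    have h1 : p.1 = q.1 := by omega
    have h2 : p.2 = q.2 := by omega
    exact Prod.ext h1 h2
  rw [hp, S_succ, Finset.sum_union hdisj, Finset.sum_biUnion hpd]
  congr 1
  · rw [Finset.sum_image (by intro a _ b _ h; simpa using h), hp]
    exact Finset.sum_congr rfl fun w _ => by rw [f, f, ascents_F_cons]
  · apply Finset.sum_congr rfl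
    intro p hp'
    rw [Finset.sum_image]
    · rw [Finset.sum_product, hp, Finset.sum_mul_sum]
      apply Finset.sum_congr rfl
      intro w1 hw1
      apply Finset.sum_congr rfl
      intro w2 hw2
      rw [f, f, f, show (Step.U :: w1 ++ Step.D :: w2 : List Step)
        = Step.U :: (w1 ++ Step.D :: w2) by simp, ascents_U]
      ring
    · rintro ⟨a1, a2⟩ ha ⟨b1, b2⟩ hb heq
      simp only [Finset.mem_coe, Finset.mem_product, mem_S] at ha hb
      simp only [List.cons_append, List.cons.injEq, true_and] at heq
      obtain ⟨h1, h2⟩ := unique_decomp ha.1 hb.1 heq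
      exact Prod.ext h1 h2

lemma S_zero : S 0 = {([] : List Step)} := by
  ext w
  rw [mem_S]
  simp only [Finset.mem_singleton]
  constructor
  · intro h
    have := length_le_pathLen w
    rw [h.1] at this
    exact List.length_eq_zero_iff.mp (by omega)
  · rintro rfl
    exact ⟨by simp, by simp, by rintro p ⟨s, hs⟩; simp_all⟩

lemma hp_zero : hp 0 = 1 := by
  rw [hp, S_zero]
  simp [f]

lemma filter_not_U (i : ℕ) :
    (S (i+1)).filter (fun w => w.head? ≠ some Step.U) = (S i).image (Step.F :: ·) := by
  ext w
  simp only [Finset.mem_filter, Finset.mem_image, mem_S]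
  constructor
  · rintro ⟨hw, hhead⟩
    rcases schroeder_decomp hw with ⟨w', rfl, h⟩ | ⟨i', j, w1, w2, hij, rfl, hs1, hs2⟩
    · exact ⟨w', h, rfl⟩
    · simp at hhead
  · rintro ⟨w', h, rfl⟩
    exact ⟨isSchroeder_F_cons h, by simp⟩

lemma g_eq (i : ℕ) : ∑ w1 ∈ S i, (Polynomial.X : Polynomial ℚ) ^ ascB w1 * f w1
    = hp i + (Polynomial.X - 1) * (if i = 0 then 1 else hp (i-1)) := by
  have hsplit : ∀ w : List Step, (Polynomial.X : Polynomial ℚ) ^ ascB w * f w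
      = f w + (Polynomial.X - 1) * (if w.head? ≠ some Step.U then f w else 0) := by
    intro w
    rw [ascB]
    by_cases h : w.head? = some Step.U <;> simp [h] <;> ring
  simp_rw [hsplit]
  rw [Finset.sum_add_distrib, ← Finset.mul_sum, ← hp]
  congr 1
  rw [Finset.sum_ite, Finset.sum_const_zero, add_zero]
  congr 1
  cases i with
  | zero =>
    rw [S_zero, Finset.filter_singleton]
    simp [f]
  | succ i' =>
    rw [show (Finset.filter (fun w => w.head? ≠ some Step.U) (S (i'+1)))
        = (S (i'+1)).filter (fun w => w.head? ≠ some Step.U) from rfl, filter_not_U]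
    simp only [Nat.succ_sub_one]
    rw [Finset.sum_image (by intro a _ b _ h; simpa using h), hp]
    exact Finset.sum_congr rfl fun w _ => by rw [f, f, ascents_F_cons]

lemma hp_one : hp 1 = Polynomial.X + 1 := by
  rw [hp_succ 0]
  simp only [Finset.Nat.antidiagonal_zero, Finset.sum_singleton]
  rw [g_eq 0, hp_zero]
  simp
  ring

lemma hp_rec (n : ℕ) : hp (n+2) = Polynomial.X * hp (n+1)
    + (∑ p ∈ Finset.HasAntidiagonal.antidiagonal (n+1), hp p.1 * hp p.2)
    + (Polynomial.X - 1) * (∑ p ∈ Finset.HasAntidiagonal.antidiagonal n, hp p.1 * hp p.2) := by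
  rw [hp_succ (n+1)]
  simp_rw [g_eq]
  rw [Finset.Nat.sum_antidiagonal_succ
    (f := fun p => (hp p.1 + (Polynomial.X - 1) * (if p.1 = 0 then 1 else hp (p.1-1))) * hp p.2)]
  rw [Finset.Nat.sum_antidiagonal_succ (f := fun p => hp p.1 * hp p.2)]
  simp only [if_pos rfl, Nat.succ_ne_zero, if_neg, Nat.add_sub_cancel, hp_zero, if_true,
    if_false, ite_true, ite_false]
  simp_rw [add_mul, Finset.sum_add_distrib, mul_assoc, ← Finset.mul_sum]
  ring


lemma ascCount_eq (n k : ℕ) :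
    ascCount n k = ((S n).filter (fun w => ascents w = k)).card := by
  rw [ascCount, ← Nat.card_eq_finsetCard]
  apply Nat.card_congr
  apply Equiv.subtypeEquivRight
  intro w
  simp [mem_S]

lemma schroederCount_eq (n : ℕ) : schroederCount n = (S n).card := by
  rw [schroederCount, ← Nat.card_eq_finsetCard]
  exact Nat.card_congr (Equiv.subtypeEquivRight fun w => by simp [mem_S])

lemma hpoly_eq (n : ℕ) : hpoly n = hp n := by
  rw [hpoly, hp]
  have hmaps : ∀ w ∈ S n, ascents w ∈ Finset.range (n+1) :=
    fun w hw => Finset.mem_range.mpr (Nat.lt_succ_of_le (ascents_le (mem_S.mp hw)))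
  rw [← Finset.sum_fiberwise_of_maps_to hmaps f]
  apply Finset.sum_congr rfl
  intro k _
  rw [ascCount_eq]
  rw [Finset.sum_congr rfl (fun w hw => by
    rw [f, (Finset.mem_filter.mp hw).2])]
  rw [Finset.sum_const, nsmul_eq_mul]
  norm_cast

lemma ascents_zero_no_U {w : List Step} (h : ascents w = 0) : Step.U ∉ w := by
  induction w with
  | nil => simp
  | cons a t ih =>
    rw [ascents_cons] at h
    have ht : ascents t = 0 := by omega
    have hind : ¬(a = Step.U ∧ t.head? ≠ some Step.U) := by
      intro hc; rw [if_pos hc] at h; omega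
    intro hmem
    rcases List.mem_cons.mp hmem with rfl | hmem'
    · push_neg at hind
      exact ih ht (List.mem_of_mem_head? (Option.mem_def.mpr (hind rfl)))
    · exact ih ht hmem'

lemma no_U_ascents {w : List Step} (h : Step.U ∉ w) : ascents w = 0 := by
  induction w with
  | nil => rfl
  | cons a t ih =>
    rw [ascents_cons, ih (fun hm => h (List.mem_cons_of_mem a hm)), if_neg]
    rintro ⟨rfl, -⟩
    exact h (List.mem_cons_self)

lemma all_F_alt {w : List Step} (h : ∀ a ∈ w, a = Step.F) : pathAlt w = 0 := by
  induction w with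
  | nil => rfl
  | cons a t ih =>
    rw [pathAlt_cons, h a (List.mem_cons_self), ih (fun b hb => h b (List.mem_cons_of_mem a hb))]
    simp [Step.alt]

lemma isSchroeder_replicate (n : ℕ) : IsSchroeder n (List.replicate n Step.F) := by
  refine ⟨?_, ?_, ?_⟩
  · simp [pathLen, List.map_replicate, List.sum_replicate, Step.len]; ring
  · exact all_F_alt (fun a ha => (List.eq_of_mem_replicate ha))
  · intro p hp'
    rw [all_F_alt (fun a ha => List.eq_of_mem_replicate (hp'.subset ha))]

lemma filter_asc_zero (n : ℕ) :
    (S n).filter (fun w => ascents w = 0) = {List.replicate n Step.F} := by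
  ext w
  simp only [Finset.mem_filter, Finset.mem_singleton, mem_S]
  constructor
  · rintro ⟨hw, ha⟩
    have hnoU : Step.U ∉ w := ascents_zero_no_U ha
    have hcU : w.count Step.U = 0 := List.count_eq_zero.mpr hnoU
    have hcD : w.count Step.D = 0 := by
      have := pathAlt_eq_count w
      rw [hw.2.1, hcU] at this
      have : (w.count Step.D : ℤ) = 0 := by omega
      exact_mod_cast this
    have hallF : ∀ a ∈ w, a = Step.F := by
      intro a ha'
      cases a
      · exact absurd ha' (List.count_eq_zero.mp hcU)
      · exact absurd ha' (List.count_eq_zero.mp hcD)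
      · rfl
    have hrep : w = List.replicate w.length Step.F := List.eq_replicate_of_mem hallF
    have hlen : w.length = n := by
      have h3 := pathLen_eq_count w
      rw [hw.1, hcU, hcD] at h3
      have : w.count Step.F = w.length := by
        rw [List.count_eq_length]
        intro a ha'
        simp [hallF a ha']
      omega
    rw [hrep, hlen]
  · rintro rfl
    exact ⟨isSchroeder_replicate n, no_U_ascents (fun hm => by
      have := List.eq_of_mem_replicate hm; simp at this)⟩

lemma hpoly_eval_one (n : ℕ) : Polynomial.eval (1 : ℚ) (hpoly n) = (schroederCount n : ℚ) := by
  rw [hpoly_eq, hp, Polynomial.eval_finset_sum, schroederCount_eq]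
  simp [f]

lemma hpoly_eval_zero (n : ℕ) : Polynomial.eval (0 : ℚ) (hpoly n) = 1 := by
  rw [hpoly_eq, hp, Polynomial.eval_finset_sum]
  have : ∀ w ∈ S n, Polynomial.eval (0:ℚ) (f w) = if ascents w = 0 then 1 else 0 := by
    intro w _
    rw [f, Polynomial.eval_pow, Polynomial.eval_X]
    rcases Nat.eq_zero_or_pos (ascents w) with h | h
    · simp [h]
    · rw [zero_pow (by omega), if_neg (by omega)]
  rw [Finset.sum_congr rfl this, Finset.sum_ite, Finset.sum_const_zero, add_zero,
    Finset.sum_const, filter_asc_zero]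
  simp


lemma rhs_ring (A : PowerSeries (Polynomial ℚ)) :
    1 + PowerSeries.X * vv * A + PowerSeries.X * (1 + PowerSeries.X * (vv - 1)) * A ^ 2
    = 1 + PowerSeries.X * (vv * A) + PowerSeries.X * (A * A)
      + PowerSeries.X * (PowerSeries.X * ((vv - 1) * (A * A))) := by ring

lemma coeff_rhs_zero (A : PowerSeries (Polynomial ℚ)) :
    (PowerSeries.coeff 0)
      (1 + PowerSeries.X * vv * A + PowerSeries.X * (1 + PowerSeries.X * (vv - 1)) * A ^ 2) = 1 := by
  rw [rhs_ring]
  simp [PowerSeries.coeff_zero_eq_constantCoeff, map_mul]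

lemma coeff_rhs_succ (A : PowerSeries (Polynomial ℚ)) (n : ℕ) :
    (PowerSeries.coeff (n+1))
      (1 + PowerSeries.X * vv * A + PowerSeries.X * (1 + PowerSeries.X * (vv - 1)) * A ^ 2)
    = Polynomial.X * PowerSeries.coeff n A
      + ∑ p ∈ Finset.HasAntidiagonal.antidiagonal n, PowerSeries.coeff p.1 A * PowerSeries.coeff p.2 A
      + if n = 0 then 0 else (Polynomial.X - 1) *
          ∑ p ∈ Finset.HasAntidiagonal.antidiagonal (n-1),
            PowerSeries.coeff p.1 A * PowerSeries.coeff p.2 A := by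
  rw [rhs_ring, map_add, map_add, map_add, PowerSeries.coeff_one, if_neg (Nat.succ_ne_zero n),
    PowerSeries.coeff_succ_X_mul, PowerSeries.coeff_succ_X_mul, PowerSeries.coeff_succ_X_mul]
  have hvv : vv * A = PowerSeries.C Polynomial.X * A := rfl
  rw [hvv, PowerSeries.coeff_C_mul, PowerSeries.coeff_mul n A A]
  cases n with
  | zero =>
    simp [PowerSeries.coeff_zero_eq_constantCoeff, map_mul]
  | succ m =>
    rw [PowerSeries.coeff_succ_X_mul, if_neg (Nat.succ_ne_zero m), Nat.succ_sub_one]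
    have hvv1 : (vv - 1 : PowerSeries (Polynomial ℚ))
        = PowerSeries.C (Polynomial.X - 1) := by
      rw [map_sub, map_one]; rfl
    rw [hvv1, PowerSeries.coeff_C_mul, PowerSeries.coeff_mul]
    ring

lemma E_eq : (PowerSeries.mk hpoly : PowerSeries (Polynomial ℚ))
    = 1 + PowerSeries.X * vv * PowerSeries.mk hpoly
      + PowerSeries.X * (1 + PowerSeries.X * (vv - 1)) * (PowerSeries.mk hpoly) ^ 2 := by
  ext n
  cases n with
  | zero =>
    rw [coeff_rhs_zero]
    simp [hpoly_eq, hp_zero]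
  | succ n =>
    rw [coeff_rhs_succ]
    simp only [PowerSeries.coeff_mk, hpoly_eq]
    cases n with
    | zero =>
      rw [if_pos rfl, hp_one, hp_zero]
      simp [Finset.Nat.antidiagonal_zero, hp_zero]
    | succ m =>
      rw [if_neg (Nat.succ_ne_zero m), Nat.succ_sub_one, hp_rec m]

lemma E_unique (E' : PowerSeries (Polynomial ℚ))
    (h0 : PowerSeries.constantCoeff E' = 1)
    (heq : E' = 1 + PowerSeries.X * vv * E'
      + PowerSeries.X * (1 + PowerSeries.X * (vv - 1)) * E' ^ 2) :
    E' = PowerSeries.mk hpoly := by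
  apply PowerSeries.ext
  intro n
  induction n using Nat.strong_induction_on with
  | _ n ih =>
    cases n with
    | zero =>
      rw [PowerSeries.coeff_zero_eq_constantCoeff, h0]
      simp [PowerSeries.constantCoeff_mk, hpoly_eq, hp_zero]
    | succ n =>
      conv_lhs => rw [heq]
      conv_rhs => rw [E_eq]
      rw [coeff_rhs_succ, coeff_rhs_succ]
      have hc : ∀ m, m ≤ n → PowerSeries.coeff m E'
          = PowerSeries.coeff m (PowerSeries.mk hpoly) :=
        fun m hm => ih m (by omega)
      have hsum : ∀ m, m ≤ n → ∑ p ∈ Finset.HasAntidiagonal.antidiagonal m,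
            PowerSeries.coeff p.1 E' * PowerSeries.coeff p.2 E'
          = ∑ p ∈ Finset.HasAntidiagonal.antidiagonal m,
            PowerSeries.coeff p.1 (PowerSeries.mk hpoly)
              * PowerSeries.coeff p.2 (PowerSeries.mk hpoly) := by
        intro m hm
        apply Finset.sum_congr rfl
        intro p hp'
        rw [Finset.HasAntidiagonal.mem_antidiagonal] at hp'
        rw [hc p.1 (by omega), hc p.2 (by omega)]
      rw [hc n le_rfl, hsum n le_rfl]
      rcases Nat.eq_zero_or_pos n with rfl | hn
      · rfl
      · rw [if_neg (by omega), if_neg (by omega), hsum (n-1) (by omega)]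

end Aux

theorem stmt19 (E : PowerSeries (Polynomial ℚ))
    (hEdef : E = PowerSeries.mk hpoly) :
    (constantCoeff E = 1 ∧
      E = 1 + X * vv * E + X * (1 + X * (vv - 1)) * E ^ 2 ∧
      ∀ E' : PowerSeries (Polynomial ℚ), constantCoeff E' = 1 →
        E' = 1 + X * vv * E' + X * (1 + X * (vv - 1)) * E' ^ 2 → E' = E) ∧
    (∀ n : ℕ, Polynomial.eval (1 : ℚ) (hpoly n) = (schroederCount n : ℚ)) ∧
    (∀ n : ℕ, Polynomial.eval (0 : ℚ) (hpoly n) = 1) := by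
  subst hEdef
  refine ⟨⟨?_, ?_, ?_⟩, Aux.hpoly_eval_one, Aux.hpoly_eval_zero⟩
  · simp [PowerSeries.constantCoeff_mk, Aux.hpoly_eq, Aux.hp_zero]
  · exact Aux.E_eq
  · intro E' h0 heq
    exact Aux.E_unique E' h0 heq
end
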